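/- arXiv:1608.06854 — 7 statements merged into one kernel-verified Lean document; each statement's English description precedes it below -/
import Mathlib

section
/- Let d, J ≥ 1 be integers. Let F, G be functions from (d-tuples of positive integers) × (positive integers) to ℂ, let A be a function from (J-tuples of positive integers) × (d-tuples of positive integers) to ℂ that is multiplicative, and let α be a function from (J-tuples of positive integers) × (d-tuples of positive integers) to d-tuples of positive integers that is multiplicative (with componentwise products), with the additional property that if every entry of the pair (a, m) is a power of a single prime p, then every entry of α(a, m) is a power of p. Assume that for every squarefree positive integer N and every tuple m, the family (A(a, m_L) · G(α(a, m_L)·(m/m_L), M)) indexed by factorizations LM = N and tuples a with a | L^∞ is absolutely summable, and similarly with F in place of G, and that F(m, N) = Σ_{LM = N} Σ_{a | L^∞} A(a, m_L) · G(α(a, m_L)·(m/m_L), M). Then for every squarefree positive integer N and every tuple m of positive integers, G(m, N) = Σ_{LM = N} μ(L) Σ_{a | L^∞} A(a, m_L) · F(α(a, m_L)·(m/m_L), M), where μ is the Möbius function. -/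
/-- `lPart L n` is the largest divisor of `n` all of whose prime factors divide `L`
(the "`L`-part" `n_L` of `n`). -/
def lPart (L n : ℕ) : ℕ := ∏ p ∈ n.primeFactors.filter (· ∣ L), p ^ n.factorization p


lemma lPart_pos (L n : ℕ) : 0 < lPart L n := by
  apply Finset.prod_pos
  intro p hp
  exact pow_pos (Nat.prime_of_mem_primeFactors (Finset.mem_filter.1 hp).1).pos _

lemma lPart_factorization (L : ℕ) {n : ℕ} (hn : n ≠ 0) (q : ℕ) :
    (lPart L n).factorization q = if q ∣ L then n.factorization q else 0 := by
  classical
  unfold lPart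
  rw [Nat.factorization_prod (fun p hp => by
    exact pow_ne_zero _ (Nat.prime_of_mem_primeFactors (Finset.mem_filter.1 hp).1).ne_zero)]
  rw [Finset.sum_apply']
  have : ∀ p ∈ n.primeFactors.filter (· ∣ L),
      (p ^ n.factorization p).factorization q
        = if p = q then n.factorization p else 0 := by
    intro p hp
    rw [(Nat.prime_of_mem_primeFactors (Finset.mem_filter.1 hp).1).factorization_pow,
      Finsupp.single_apply]
  rw [Finset.sum_congr rfl this, Finset.sum_ite_eq' (n.primeFactors.filter (· ∣ L)) q
    (fun p => n.factorization p)]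
  by_cases hqL : q ∣ L
  · simp only [hqL, if_true]
    by_cases hq : q ∈ n.primeFactors
    · simp [Finset.mem_filter, hq, hqL]
    · have : n.factorization q = 0 := by
        rw [← Finsupp.notMem_support_iff, Nat.support_factorization]; exact hq
      simp [Finset.mem_filter, hq, this]
  · simp [Finset.mem_filter, hqL]

lemma lPart_dvd (L n : ℕ) : lPart L n ∣ n := by
  rcases eq_or_ne n 0 with rfl | hn
  · exact Dvd.intro 0 rfl
  · rw [← Nat.factorization_le_iff_dvd (lPart_pos L n).ne' hn]
    intro q
    rw [lPart_factorization L hn q]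
    split <;> simp

lemma prime_dvd_of_dvd_lPart {L n p : ℕ} (hp : p.Prime) (h : p ∣ lPart L n) : p ∣ L := by
  rcases eq_or_ne n 0 with rfl | hn
  · simp [lPart] at h
    exact absurd h hp.ne_one
  · have h1 : 1 ≤ (lPart L n).factorization p :=
      (Nat.Prime.dvd_iff_one_le_factorization hp (lPart_pos L n).ne').1 h
    rw [lPart_factorization L hn p] at h1
    by_contra hpL
    simp [hpL] at h1

lemma lPart_eq_one {L n : ℕ} (h : Nat.Coprime n L) : lPart L n = 1 := by
  unfold lPart
  rw [Finset.filter_false_of_mem, Finset.prod_empty]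
  intro p hp hpL
  have hpn : p ∣ n := Nat.dvd_of_mem_primeFactors hp
  have : p ∣ 1 := h ▸ Nat.dvd_gcd hpn hpL
  exact (Nat.prime_of_mem_primeFactors hp).ne_one (Nat.eq_one_of_dvd_one this)

lemma lPart_eq_self {L n : ℕ} (hn : n ≠ 0) (h : ∀ p, p.Prime → p ∣ n → p ∣ L) :
    lPart L n = n := by
  unfold lPart
  rw [Finset.filter_true_of_mem (fun p hp =>
    h p (Nat.prime_of_mem_primeFactors hp) (Nat.dvd_of_mem_primeFactors hp))]
  rw [← Nat.support_factorization]
  exact Nat.factorization_prod_pow_eq_self hn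

lemma lPart_mul {L x y : ℕ} (hx : x ≠ 0) (hy : y ≠ 0) :
    lPart L (x * y) = lPart L x * lPart L y := by
  apply Nat.eq_of_factorization_eq (lPart_pos _ _).ne'
    (Nat.mul_ne_zero (lPart_pos _ _).ne' (lPart_pos _ _).ne')
  intro q
  rw [lPart_factorization L (Nat.mul_ne_zero hx hy) q,
    Nat.factorization_mul (lPart_pos L x).ne' (lPart_pos L y).ne', Finsupp.add_apply,
    lPart_factorization L hx q, lPart_factorization L hy q,
    Nat.factorization_mul hx hy, Finsupp.add_apply]
  split <;> simp

lemma lPart_mul_left {L L' : ℕ} (h : Nat.Coprime L L') {n : ℕ} (hn : n ≠ 0) :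
    lPart (L * L') n = lPart L n * lPart L' n := by
  apply Nat.eq_of_factorization_eq (lPart_pos _ _).ne'
    (Nat.mul_ne_zero (lPart_pos _ _).ne' (lPart_pos _ _).ne')
  intro q
  rw [lPart_factorization _ hn q,
    Nat.factorization_mul (lPart_pos L n).ne' (lPart_pos L' n).ne', Finsupp.add_apply,
    lPart_factorization _ hn q, lPart_factorization _ hn q]
  by_cases hq : q.Prime
  · by_cases h1 : q ∣ L <;> by_cases h2 : q ∣ L'
    · exact absurd (Nat.eq_one_of_dvd_one (h ▸ Nat.dvd_gcd h1 h2)) hq.ne_one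
    · simp [hq.dvd_mul, h1, h2]
    · simp [hq.dvd_mul, h1, h2]
    · simp [hq.dvd_mul, h1, h2]
  · have : n.factorization q = 0 := Nat.factorization_eq_zero_of_not_prime n hq
    simp [this]

lemma coprime_div_lPart {L n : ℕ} (hn : n ≠ 0) : Nat.Coprime (n / lPart L n) L := by
  by_contra hcop
  obtain ⟨p, pp, pd⟩ := Nat.exists_prime_and_dvd fun h : Nat.gcd (n / lPart L n) L = 1 => hcop h
  have hpq : p ∣ n / lPart L n := pd.trans (Nat.gcd_dvd_left _ _)
  have hpL : p ∣ L := pd.trans (Nat.gcd_dvd_right _ _)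
  have hq0 : n / lPart L n ≠ 0 := by
    have := Nat.div_pos (Nat.le_of_dvd (Nat.pos_of_ne_zero hn) (lPart_dvd L n)) (lPart_pos L n)
    exact this.ne'
  have h1 : 1 ≤ (n / lPart L n).factorization p :=
    (Nat.Prime.dvd_iff_one_le_factorization pp hq0).1 hpq
  rw [Nat.factorization_div (lPart_dvd L n)] at h1
  rw [Finsupp.tsub_apply, lPart_factorization L hn p, if_pos hpL] at h1
  simp at h1

lemma coprime_of_primes {x y L L' : ℕ} (hLL : Nat.Coprime L L')
    (hx : ∀ p, p.Prime → p ∣ x → p ∣ L) (hy : ∀ p, p.Prime → p ∣ y → p ∣ L') :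
    Nat.Coprime x y := by
  by_contra hcop
  obtain ⟨p, pp, pd⟩ := Nat.exists_prime_and_dvd fun h : Nat.gcd x y = 1 => hcop h
  have h1 := hx p pp (pd.trans (Nat.gcd_dvd_left _ _))
  have h2 := hy p pp (pd.trans (Nat.gcd_dvd_right _ _))
  exact pp.ne_one (Nat.eq_one_of_dvd_one (hLL ▸ Nat.dvd_gcd h1 h2))

lemma alpha_support {d J : ℕ} (α : (Fin J → ℕ) → (Fin d → ℕ) → (Fin d → ℕ))
    (hα1 : α 1 1 = 1)
    (hαmul : ∀ (a b : Fin J → ℕ) (m n : Fin d → ℕ),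
      Nat.Coprime ((∏ i, a i) * ∏ i, m i) ((∏ i, b i) * ∏ i, n i) →
      α (a * b) (m * n) = α a m * α b n)
    (hαprime : ∀ p : ℕ, p.Prime → ∀ (a : Fin J → ℕ) (m : Fin d → ℕ),
      (∀ i, ∃ k, a i = p ^ k) → (∀ i, ∃ k, m i = p ^ k) → ∀ i, ∃ k, α a m i = p ^ k) :
    ∀ (n : ℕ) (a : Fin J → ℕ) (m : Fin d → ℕ), (∏ j, a j) * (∏ j, m j) = n →
      (∀ i, 0 < a i) → (∀ i, 0 < m i) →
      ∀ i (q : ℕ), q.Prime → q ∣ α a m i → q ∣ (∏ j, a j) * (∏ j, m j) := by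
  intro n
  induction n using Nat.strong_induction_on with
  | _ n ih =>
  intro a m hn ha hm i q hq hqd
  by_cases h1 : (∏ j, a j) * (∏ j, m j) = 1
  · have ha1 : a = 1 := by
      funext j
      exact Nat.eq_one_of_dvd_one (((Finset.dvd_prod_of_mem a (Finset.mem_univ j)).trans
        (dvd_mul_right _ _)).trans (dvd_of_eq h1))
    have hm1 : m = 1 := by
      funext j
      exact Nat.eq_one_of_dvd_one (((Finset.dvd_prod_of_mem m (Finset.mem_univ j)).trans
        (dvd_mul_left _ _)).trans (dvd_of_eq h1))
    rw [ha1, hm1, hα1] at hqd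
    exact absurd (Nat.eq_one_of_dvd_one hqd) hq.ne_one
  · obtain ⟨p, pp, pdvd⟩ := Nat.exists_prime_and_dvd h1
    set ap : Fin J → ℕ := fun j => p ^ (a j).factorization p with hap
    set a' : Fin J → ℕ := fun j => a j / p ^ (a j).factorization p with ha'
    set mp : Fin d → ℕ := fun j => p ^ (m j).factorization p with hmp
    set m' : Fin d → ℕ := fun j => m j / p ^ (m j).factorization p with hm'
    have haeq : a = ap * a' := by
      funext j
      exact (Nat.ordProj_mul_ordCompl_eq_self (a j) p).symm
    have hmeq : m = mp * m' := by
      funext j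
      exact (Nat.ordProj_mul_ordCompl_eq_self (m j) p).symm
    have ha'pos : ∀ j, 0 < a' j := fun j => Nat.ordCompl_pos p (ha j).ne'
    have hm'pos : ∀ j, 0 < m' j := fun j => Nat.ordCompl_pos p (hm j).ne'
    have hcopp : Nat.Coprime p ((∏ j, a' j) * ∏ j, m' j) := by
      apply Nat.Coprime.mul_right
      · exact Nat.Coprime.prod_right fun j _ => Nat.coprime_ordCompl pp (ha j).ne'
      · exact Nat.Coprime.prod_right fun j _ => Nat.coprime_ordCompl pp (hm j).ne'
    have hcop : Nat.Coprime ((∏ j, ap j) * ∏ j, mp j) ((∏ j, a' j) * ∏ j, m' j) :=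
      Nat.Coprime.mul
        (Nat.Coprime.prod_left fun j _ => (hcopp.pow_left _))
        (Nat.Coprime.prod_left fun j _ => (hcopp.pow_left _))
    have hsplit : α a m = α ap mp * α a' m' := by
      rw [haeq, hmeq]; exact hαmul ap a' mp m' hcop
    rw [hsplit, Pi.mul_apply] at hqd
    rcases (Nat.Prime.dvd_mul hq).1 hqd with hc | hc
    · obtain ⟨k, hk⟩ := hαprime p pp ap mp (fun j => ⟨_, rfl⟩) (fun j => ⟨_, rfl⟩) i
      rw [hk] at hc
      have : q = p := (Nat.prime_dvd_prime_iff_eq hq pp).1 (hq.dvd_of_dvd_pow hc)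
      rw [this]; exact pdvd
    · set n' : ℕ := (∏ j, a' j) * ∏ j, m' j with hn'
      have hdvdn : n' ∣ (∏ j, a j) * (∏ j, m j) := by
        apply mul_dvd_mul
        · exact Finset.prod_dvd_prod_of_dvd _ _ fun j _ => Nat.ordCompl_dvd (a j) p
        · exact Finset.prod_dvd_prod_of_dvd _ _ fun j _ => Nat.ordCompl_dvd (m j) p
      have hn'pos : 0 < n' := Nat.mul_pos
        (Finset.prod_pos fun j _ => ha'pos j) (Finset.prod_pos fun j _ => hm'pos j)
      have hlt : n' < n := by
        rcases hdvdn.trans (dvd_of_eq hn) with ⟨c, hc2⟩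
        have hpn' : ¬ p ∣ n' := fun hdd =>
          pp.ne_one (Nat.eq_one_of_dvd_one (hcopp ▸ Nat.dvd_gcd dvd_rfl hdd))
        have hc1 : c ≠ 1 := by
          rintro rfl
          rw [mul_one] at hc2
          exact hpn' (hc2 ▸ (hn ▸ pdvd))
        have hprodpos : 0 < (∏ j, a j) * ∏ j, m j :=
          Nat.mul_pos (Finset.prod_pos fun j _ => ha j) (Finset.prod_pos fun j _ => hm j)
        have h2c : 2 ≤ c := by
          rcases Nat.lt_or_ge c 2 with h | h
          · interval_cases c
            · rw [mul_zero] at hc2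
              exact absurd hc2 (hn ▸ hprodpos.ne')
            · exact absurd rfl hc1
          · exact h
        calc n' < n' * 2 := lt_mul_of_one_lt_right hn'pos one_lt_two
        _ ≤ n' * c := Nat.mul_le_mul le_rfl h2c
        _ = n := hc2.symm
      have := ih n' hlt a' m' rfl ha'pos hm'pos i q hq hc
      exact dvd_trans this hdvdn

lemma comp1 {L L' : ℕ} (hcop : Nat.Coprime L L') {mi w : ℕ} (hmi : mi ≠ 0) (hw : w ≠ 0)
    (hwL : ∀ p, p.Prime → p ∣ w → p ∣ L) :
    lPart L' (w * (mi / lPart L (mi))) = lPart L' mi := by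
  have hq0 : mi / lPart L mi ≠ 0 :=
    (Nat.div_pos (Nat.le_of_dvd (Nat.pos_of_ne_zero hmi) (lPart_dvd L mi)) (lPart_pos L mi)).ne'
  have hw1 : lPart L' w = 1 :=
    lPart_eq_one (coprime_of_primes hcop hwL (fun p _ h => h))
  have hu1 : lPart L' (lPart L mi) = 1 :=
    lPart_eq_one (coprime_of_primes hcop (fun p pp h => prime_dvd_of_dvd_lPart pp h)
      (fun p _ h => h))
  have hmieq : lPart L mi * (mi / lPart L mi) = mi := Nat.mul_div_cancel' (lPart_dvd L mi)
  have h2 : lPart L' mi = lPart L' (mi / lPart L mi) := by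
    conv_lhs => rw [← hmieq]
    rw [lPart_mul (lPart_pos L mi).ne' hq0, hu1, one_mul]
  rw [lPart_mul hw hq0, hw1, one_mul, ← h2]

lemma comp3 {L L' : ℕ} (hcop : Nat.Coprime L L') {mi w : ℕ} (hmi : mi ≠ 0) (hw : w ≠ 0)
    (hwL : ∀ p, p.Prime → p ∣ w → p ∣ L) :
    w * (mi / lPart L mi) / lPart L' (w * (mi / lPart L mi))
      = w * (mi / lPart (L * L') mi) := by
  have hq0 : mi / lPart L mi ≠ 0 :=
    (Nat.div_pos (Nat.le_of_dvd (Nat.pos_of_ne_zero hmi) (lPart_dvd L mi)) (lPart_pos L mi)).ne'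
  have hu1 : lPart L' (lPart L mi) = 1 :=
    lPart_eq_one (coprime_of_primes hcop (fun p pp h => prime_dvd_of_dvd_lPart pp h)
      (fun p _ h => h))
  have hmieq : lPart L mi * (mi / lPart L mi) = mi := Nat.mul_div_cancel' (lPart_dvd L mi)
  have h2 : lPart L' mi = lPart L' (mi / lPart L mi) := by
    conv_lhs => rw [← hmieq]
    rw [lPart_mul (lPart_pos L mi).ne' hq0, hu1, one_mul]
  rw [comp1 hcop hmi hw hwL, Nat.mul_div_assoc w (h2 ▸ lPart_dvd L' (mi / lPart L mi)),
    Nat.div_div_eq_div_mul, ← lPart_mul_left hcop hmi]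

abbrev TupT (J L : ℕ) : Type :=
  {a : Fin J → ℕ // (∀ i, 0 < a i) ∧ ∀ i, ∀ p : ℕ, p.Prime → p ∣ a i → p ∣ L}

abbrev IdxI (J N : ℕ) : Type := Σ K : {K : ℕ // K ∣ N}, TupT J K.1

abbrev IdxW (J N L : ℕ) : Type :=
  Σ _a : TupT J L, Σ L' : {L' : ℕ // L' ∣ N / L}, TupT J L'.1

lemma IdxI_ext {J N : ℕ} {x y : IdxI J N} (h1 : x.1.1 = y.1.1) (h2 : x.2.1 = y.2.1) :
    x = y := by
  obtain ⟨⟨K1, hK1⟩, ⟨c1, hc1⟩⟩ := x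
  obtain ⟨⟨K2, hK2⟩, ⟨c2, hc2⟩⟩ := y
  dsimp at h1 h2
  subst h1
  subst h2
  rfl

def iotaW {J N : ℕ} (L : ℕ) (hL : L ∣ N) : IdxW J N L → IdxI J N :=
  fun x => ⟨⟨L * x.2.1.1, (Nat.dvd_div_iff_mul_dvd hL).1 x.2.1.2⟩,
    ⟨x.1.1 * x.2.2.1, ⟨fun i => Nat.mul_pos (x.1.2.1 i) (x.2.2.2.1 i),
      fun i p pp pd => by
        simp only [Pi.mul_apply] at pd
        rcases (Nat.Prime.dvd_mul pp).1 pd with h | h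
        · exact Dvd.dvd.mul_right (x.1.2.2 i p pp h) _
        · exact Dvd.dvd.mul_left (x.2.2.2.2 i p pp h) _⟩⟩⟩

lemma iotaW_inj {J N : ℕ} (hN : Squarefree N) (L : ℕ) (hL : L ∣ N) :
    Function.Injective (iotaW (J := J) L hL) := by
  have hN0 : N ≠ 0 := hN.ne_zero
  have hL0 : 0 < L := Nat.pos_of_ne_zero (fun h => hN0 (by simpa [h] using hL))
  rintro ⟨⟨a1, hA1⟩, ⟨⟨l1, hl1⟩, ⟨b1, hB1⟩⟩⟩ ⟨⟨a2, hA2⟩, ⟨⟨l2, hl2⟩, ⟨b2, hB2⟩⟩⟩ h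
  have h1 : L * l1 = L * l2 := congrArg (fun z : IdxI J N => z.1.1) h
  have h2 : a1 * b1 = a2 * b2 := congrArg (fun z : IdxI J N => z.2.1) h
  have hll : l1 = l2 := Nat.eq_of_mul_eq_mul_left hL0 h1
  subst hll
  have hcop : Nat.Coprime L l1 := by
    have hdvd : L * l1 ∣ N := (Nat.dvd_div_iff_mul_dvd hL).1 hl1
    exact (Nat.squarefree_mul_iff.1 (hN.squarefree_of_dvd hdvd)).1
  have key : ∀ (aa bb : Fin J → ℕ), (∀ i, 0 < aa i) →
      (∀ i, ∀ p : ℕ, p.Prime → p ∣ aa i → p ∣ L) →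
      (∀ i, 0 < bb i) → (∀ i, ∀ p : ℕ, p.Prime → p ∣ bb i → p ∣ l1) →
      ∀ i, aa i = lPart L (aa i * bb i) := by
    intro aa bb haa haL hbb hbL i
    rw [lPart_mul (haa i).ne' (hbb i).ne',
      lPart_eq_self (haa i).ne' (fun p pp hd => haL i p pp hd),
      lPart_eq_one (coprime_of_primes hcop.symm (hbL i) (fun p _ hh => hh)), mul_one]
  have ha : a1 = a2 := by
    funext i
    rw [key a1 b1 hA1.1 hA1.2 hB1.1 hB1.2 i, key a2 b2 hA2.1 hA2.2 hB2.1 hB2.2 i]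
    have h2i := congrFun h2 i
    simp only [Pi.mul_apply] at h2i
    rw [h2i]
  subst ha
  have hb : b1 = b2 := by
    funext i
    have h2i := congrFun h2 i
    simp only [Pi.mul_apply] at h2i
    exact Nat.eq_of_mul_eq_mul_left (hA1.1 i) h2i
  subst hb
  rfl

lemma iotaW_surj {J N : ℕ} (hN : Squarefree N) (L : ℕ) (hL : L ∣ N)
    (y : IdxI J N) (hLy : L ∣ y.1.1) : ∃ x, iotaW (J := J) L hL x = y := by
  have hN0 : N ≠ 0 := hN.ne_zero
  obtain ⟨⟨K, hK⟩, ⟨c, hcpos, hcP⟩⟩ := y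
  simp only at hLy
  obtain ⟨L', rfl⟩ := hLy
  have hcopLL : Nat.Coprime L L' := (Nat.squarefree_mul_iff.1 (hN.squarefree_of_dvd hK)).1
  have hL' : L' ∣ N / L := (Nat.dvd_div_iff_mul_dvd hL).2 hK
  refine ⟨⟨⟨fun i => lPart L (c i), ⟨fun i => lPart_pos L (c i),
      fun i p pp hd => prime_dvd_of_dvd_lPart pp hd⟩⟩,
    ⟨⟨L', hL'⟩, ⟨fun i => c i / lPart L (c i),
      ⟨fun i => Nat.div_pos (Nat.le_of_dvd (hcpos i) (lPart_dvd L (c i))) (lPart_pos L (c i)),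
       fun i p pp hd => ?_⟩⟩⟩⟩, ?_⟩
  · have hpc : p ∣ c i := hd.trans (Nat.div_dvd_of_dvd (lPart_dvd L (c i)))
    have hpLL : p ∣ L * L' := hcP i p pp hpc
    rcases (Nat.Prime.dvd_mul pp).1 hpLL with h | h
    · exfalso
      have hcop : Nat.Coprime (c i / lPart L (c i)) L := coprime_div_lPart (hcpos i).ne'
      exact pp.ne_one (Nat.eq_one_of_dvd_one (hcop ▸ Nat.dvd_gcd hd h))
    · exact h
  · apply IdxI_ext
    · rfl
    · funext i
      exact Nat.mul_div_cancel' (lPart_dvd L (c i))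

lemma moebius_sum_eq (K : ℕ) (hK : K ≠ 0) :
    ∑ L ∈ K.divisors, (ArithmeticFunction.moebius L : ℂ) = if K = 1 then 1 else 0 := by
  have h := congrArg (fun f : ArithmeticFunction ℤ => f K)
    ArithmeticFunction.moebius_mul_coe_zeta
  simp only [ArithmeticFunction.coe_mul_zeta_apply, ArithmeticFunction.one_apply] at h
  have : ((∑ L ∈ K.divisors, ArithmeticFunction.moebius L : ℤ) : ℂ)
      = ((if K = 1 then 1 else 0 : ℤ) : ℂ) := by rw [h]
  rw [Int.cast_sum] at this
  simpa using this


set_option maxHeartbeats 2000000 in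
/-- inversion formula. Suppose `F`, `G` are complex-valued functions of a
`d`-tuple of positive integers and a positive integer level, `A` is a multiplicative
complex-valued function of a `J`-tuple and a `d`-tuple of positive integers, and `α` is a
multiplicative tuple-valued function sending prime-power input pairs to prime-power tuples
(for the same prime).  If, for every squarefree `N` and every tuple `m`, the families defining
the sums below are absolutely summable and
`F(m, N) = ∑_{L M = N} ∑_{a ∣ L^∞} A(a, m_L) G(α(a, m_L) ⬝ (m / m_L), M)`,
then for every squarefree `N` and tuple `m`,
`G(m, N) = ∑_{L M = N} μ(L) ∑_{a ∣ L^∞} A(a, m_L) F(α(a, m_L) ⬝ (m / m_L), M)`. -/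
theorem stmt3
    (d J : ℕ) (hd : 1 ≤ d) (hJ : 1 ≤ J)
    (F G : (Fin d → ℕ) → ℕ → ℂ)
    (A : (Fin J → ℕ) → (Fin d → ℕ) → ℂ)
    (α : (Fin J → ℕ) → (Fin d → ℕ) → (Fin d → ℕ))
    (hA1 : A 1 1 = 1)
    (hAmul : ∀ (a b : Fin J → ℕ) (m n : Fin d → ℕ),
      Nat.Coprime ((∏ i, a i) * ∏ i, m i) ((∏ i, b i) * ∏ i, n i) →
      A (a * b) (m * n) = A a m * A b n)
    (hα1 : α 1 1 = 1)
    (hαmul : ∀ (a b : Fin J → ℕ) (m n : Fin d → ℕ),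
      Nat.Coprime ((∏ i, a i) * ∏ i, m i) ((∏ i, b i) * ∏ i, n i) →
      α (a * b) (m * n) = α a m * α b n)
    (hαpos : ∀ (a : Fin J → ℕ) (m : Fin d → ℕ),
      (∀ i, 0 < a i) → (∀ i, 0 < m i) → ∀ i, 0 < α a m i)
    (hαprime : ∀ p : ℕ, p.Prime → ∀ (a : Fin J → ℕ) (m : Fin d → ℕ),
      (∀ i, ∃ k, a i = p ^ k) → (∀ i, ∃ k, m i = p ^ k) → ∀ i, ∃ k, α a m i = p ^ k)
    (hGsum : ∀ N : ℕ, Squarefree N → ∀ m : Fin d → ℕ, (∀ i, 0 < m i) →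
      Summable (fun x : Σ L : {L : ℕ // L ∣ N},
          {a : Fin J → ℕ // (∀ i, 0 < a i) ∧ ∀ i, ∀ p : ℕ, p.Prime → p ∣ a i → p ∣ L.1} =>
        ‖A x.2.1 (fun i => lPart x.1.1 (m i)) *
          G (α x.2.1 (fun i => lPart x.1.1 (m i)) * fun i => m i / lPart x.1.1 (m i))
            (N / x.1.1)‖))
    (hFsum : ∀ N : ℕ, Squarefree N → ∀ m : Fin d → ℕ, (∀ i, 0 < m i) →
      Summable (fun x : Σ L : {L : ℕ // L ∣ N},
          {a : Fin J → ℕ // (∀ i, 0 < a i) ∧ ∀ i, ∀ p : ℕ, p.Prime → p ∣ a i → p ∣ L.1} =>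
        ‖A x.2.1 (fun i => lPart x.1.1 (m i)) *
          F (α x.2.1 (fun i => lPart x.1.1 (m i)) * fun i => m i / lPart x.1.1 (m i))
            (N / x.1.1)‖))
    (hrel : ∀ N : ℕ, Squarefree N → ∀ m : Fin d → ℕ, (∀ i, 0 < m i) →
      F m N = ∑ L ∈ N.divisors,
        ∑' a : {a : Fin J → ℕ // (∀ i, 0 < a i) ∧ ∀ i, ∀ p : ℕ, p.Prime → p ∣ a i → p ∣ L},
          A a.1 (fun i => lPart L (m i)) *
            G (α a.1 (fun i => lPart L (m i)) * fun i => m i / lPart L (m i)) (N / L))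
    (N : ℕ) (hN : Squarefree N) (m : Fin d → ℕ) (hm : ∀ i, 0 < m i) :
    G m N = ∑ L ∈ N.divisors, (ArithmeticFunction.moebius L : ℂ) *
        ∑' a : {a : Fin J → ℕ // (∀ i, 0 < a i) ∧ ∀ i, ∀ p : ℕ, p.Prime → p ∣ a i → p ∣ L},
          A a.1 (fun i => lPart L (m i)) *
            F (α a.1 (fun i => lPart L (m i)) * fun i => m i / lPart L (m i)) (N / L) := by

  classical
  have hN0 : N ≠ 0 := hN.ne_zero
  -- prime support of α
  have hαdvd : ∀ (L : ℕ) (a : Fin J → ℕ) (mm : Fin d → ℕ), (∀ i, 0 < a i) → (∀ i, 0 < mm i) →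
      (∀ i, ∀ p : ℕ, p.Prime → p ∣ a i → p ∣ L) →
      (∀ i, ∀ p : ℕ, p.Prime → p ∣ mm i → p ∣ L) →
      ∀ i (p : ℕ), p.Prime → p ∣ α a mm i → p ∣ L := by
    intro L a mm ha hmm haL hmmL i p pp pd
    have h := alpha_support α hα1 hαmul hαprime _ a mm rfl ha hmm i p pp pd
    rcases (Nat.Prime.dvd_mul pp).1 h with h | h
    · obtain ⟨j, -, hj⟩ := (Prime.dvd_finset_prod_iff pp.prime _).1 h
      exact haL j p pp hj
    · obtain ⟨j, -, hj⟩ := (Prime.dvd_finset_prod_iff pp.prime _).1 h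
      exact hmmL j p pp hj
  have hprodL : ∀ (LL : ℕ) (c : Fin J → ℕ), (∀ i, ∀ p : ℕ, p.Prime → p ∣ c i → p ∣ LL) →
      ∀ p : ℕ, p.Prime → p ∣ (∏ i, c i) * ∏ i, lPart LL (m i) → p ∣ LL := by
    intro LL c hc p pp pd
    rcases (Nat.Prime.dvd_mul pp).1 pd with h | h
    · obtain ⟨j, -, hj⟩ := (Prime.dvd_finset_prod_iff pp.prime _).1 h
      exact hc j p pp hj
    · obtain ⟨j, -, hj⟩ := (Prime.dvd_finset_prod_iff pp.prime _).1 h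
      exact prime_dvd_of_dvd_lPart pp hj
  set Φ : ℕ → (Fin J → ℕ) → ℂ := fun K c =>
    A c (fun i => lPart K (m i)) *
      G (α c (fun i => lPart K (m i)) * fun i => m i / lPart K (m i)) (N / K) with hΦdef
  set u : IdxI J N → ℂ := fun y => Φ y.1.1 y.2.1 with hudef
  have hS : Summable (fun y : IdxI J N => ‖u y‖) := hGsum N hN m hm
  have main :
      (∑ L ∈ N.divisors, (ArithmeticFunction.moebius L : ℂ) *
        ∑' a : TupT J L, A a.1 (fun i => lPart L (m i)) *
          F (α a.1 (fun i => lPart L (m i)) * fun i => m i / lPart L (m i)) (N / L))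
      = G m N := by
    have step1 : ∀ L ∈ N.divisors,
        (ArithmeticFunction.moebius L : ℂ) *
          ∑' a : TupT J L, A a.1 (fun i => lPart L (m i)) *
            F (α a.1 (fun i => lPart L (m i)) * fun i => m i / lPart L (m i)) (N / L)
        = ∑' y : IdxI J N,
            (if L ∣ y.1.1 then (ArithmeticFunction.moebius L : ℂ) * u y else 0) := by
      intro L hLmem
      have hLN : L ∣ N := (Nat.mem_divisors.1 hLmem).1
      have hNL0 : N / L ≠ 0 := by
        have hL0 : 0 < L := Nat.pos_of_ne_zero (fun h => hN0 (by simpa [h] using hLN))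
        exact (Nat.div_pos (Nat.le_of_dvd (Nat.pos_of_ne_zero hN0) hLN) hL0).ne'
      have hWnorm : Summable fun x : IdxW J N L => ‖u (iotaW L hLN x)‖ :=
        hS.comp_injective (iotaW_inj hN L hLN)
      have hW : Summable fun x : IdxW J N L => u (iotaW L hLN x) :=
        Summable.of_norm hWnorm
      -- expansion of F plus composition
      have expand : ∀ a : TupT J L,
          A a.1 (fun i => lPart L (m i)) *
            F (α a.1 (fun i => lPart L (m i)) * fun i => m i / lPart L (m i)) (N / L)
          = ∑ L' ∈ (N / L).divisors, ∑' b : TupT J L', Φ (L * L') (a.1 * b.1) := by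
        intro a
        have hNLsq : Squarefree (N / L) := hN.squarefree_of_dvd (Nat.div_dvd_of_dvd hLN)
        have hmlp_pos : ∀ i, 0 < lPart L (m i) := fun i => lPart_pos _ _
        have hw : ∀ i, 0 < α a.1 (fun i => lPart L (m i)) i := hαpos a.1 _ a.2.1 hmlp_pos
        have hwL : ∀ i (p : ℕ), p.Prime → p ∣ α a.1 (fun i => lPart L (m i)) i → p ∣ L :=
          hαdvd L a.1 _ a.2.1 hmlp_pos a.2.2 (fun i p pp hd => prime_dvd_of_dvd_lPart pp hd)
        have hM'pos : ∀ i,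
            0 < (α a.1 (fun i => lPart L (m i)) * fun i => m i / lPart L (m i)) i := fun i =>
          Nat.mul_pos (hw i)
            (Nat.div_pos (Nat.le_of_dvd (hm i) (lPart_dvd _ _)) (lPart_pos _ _))
        rw [hrel (N / L) hNLsq _ hM'pos, Finset.mul_sum]
        refine Finset.sum_congr rfl fun L' hL'mem => ?_
        have hL'd : L' ∣ N / L := (Nat.mem_divisors.1 hL'mem).1
        have hLL'N : L * L' ∣ N := (Nat.dvd_div_iff_mul_dvd hLN).1 hL'd
        have hcop : Nat.Coprime L L' := (Nat.squarefree_mul_iff.1 (hN.squarefree_of_dvd hLL'N)).1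
        rw [← tsum_mul_left]
        refine tsum_congr fun b => ?_
        have e_ml : (fun i => lPart L'
              ((α a.1 (fun i => lPart L (m i)) * fun i => m i / lPart L (m i)) i))
            = fun i => lPart L' (m i) :=
          funext fun i => comp1 hcop (hm i).ne' (hw i).ne' (hwL i)
        have e_q : (fun i =>
              (α a.1 (fun i => lPart L (m i)) * fun i => m i / lPart L (m i)) i /
                lPart L' ((α a.1 (fun i => lPart L (m i)) * fun i => m i / lPart L (m i)) i))
            = fun i => α a.1 (fun i => lPart L (m i)) i * (m i / lPart (L * L') (m i)) :=
          funext fun i => comp3 hcop (hm i).ne' (hw i).ne' (hwL i)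
        have hco : Nat.Coprime ((∏ i, a.1 i) * ∏ i, lPart L (m i))
            ((∏ i, b.1 i) * ∏ i, lPart L' (m i)) :=
          coprime_of_primes hcop (hprodL L a.1 a.2.2) (hprodL L' b.1 b.2.2)
        have e_lp : (fun i => lPart (L * L') (m i))
            = (fun i => lPart L (m i)) * fun i => lPart L' (m i) :=
          funext fun i => lPart_mul_left hcop (hm i).ne'
        have hA2 : A (a.1 * b.1) (fun i => lPart (L * L') (m i))
            = A a.1 (fun i => lPart L (m i)) * A b.1 (fun i => lPart L' (m i)) := by
          rw [e_lp]; exact hAmul a.1 b.1 _ _ hco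
        have hα2 : α (a.1 * b.1) (fun i => lPart (L * L') (m i))
            = α a.1 (fun i => lPart L (m i)) * α b.1 (fun i => lPart L' (m i)) := by
          rw [e_lp]; exact hαmul a.1 b.1 _ _ hco
        have e_G : α b.1 (fun i => lPart L' (m i)) *
              (fun i => α a.1 (fun i => lPart L (m i)) i * (m i / lPart (L * L') (m i)))
            = α (a.1 * b.1) (fun i => lPart (L * L') (m i)) *
              fun i => m i / lPart (L * L') (m i) := by
          rw [hα2]
          funext i
          simp only [Pi.mul_apply]
          ring
        rw [hΦdef]
        show A a.1 (fun i => lPart L (m i)) * (A b.1 _ * G _ (N / L / L'))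
          = A (a.1 * b.1) (fun i => lPart (L * L') (m i)) *
            G (α (a.1 * b.1) (fun i => lPart (L * L') (m i)) *
              fun i => m i / lPart (L * L') (m i)) (N / (L * L'))
        rw [e_ml, e_q, Nat.div_div_eq_div_mul, e_G, hA2]
        ring
      calc (ArithmeticFunction.moebius L : ℂ) *
          ∑' a : TupT J L, A a.1 (fun i => lPart L (m i)) *
            F (α a.1 (fun i => lPart L (m i)) * fun i => m i / lPart L (m i)) (N / L)
          = (ArithmeticFunction.moebius L : ℂ) *
            ∑' a : TupT J L, ∑ L' ∈ (N / L).divisors,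
              ∑' b : TupT J L', Φ (L * L') (a.1 * b.1) := by
            rw [tsum_congr expand]
        _ = (ArithmeticFunction.moebius L : ℂ) *
            ∑' a : TupT J L, ∑' z : (Σ L' : {L' : ℕ // L' ∣ N / L}, TupT J L'.1),
              u (iotaW L hLN ⟨a, z⟩) := by
            refine congrArg _ (tsum_congr fun a => ?_)
            calc ∑ L' ∈ (N / L).divisors, ∑' b : TupT J L', Φ (L * L') (a.1 * b.1)
                = ∑' L' : {x : ℕ // x ∈ (N / L).divisors},
                    ∑' b : TupT J L'.1, Φ (L * L'.1) (a.1 * b.1) :=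
                  (Finset.tsum_subtype (N / L).divisors
                    (fun K => ∑' b : TupT J K, Φ (L * K) (a.1 * b.1))).symm
              _ = ∑' L' : {L' : ℕ // L' ∣ N / L},
                    ∑' b : TupT J L'.1, Φ (L * L'.1) (a.1 * b.1) :=
                  (Equiv.subtypeEquivRight (fun x => Nat.mem_divisors.trans
                    (and_iff_left hNL0))).tsum_eq
                    (fun L' : {L' : ℕ // L' ∣ N / L} =>
                      ∑' b : TupT J L'.1, Φ (L * L'.1) (a.1 * b.1))
              _ = ∑' L' : {L' : ℕ // L' ∣ N / L},
                    ∑' b : TupT J L'.1, u (iotaW L hLN ⟨a, ⟨L', b⟩⟩) :=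
                  tsum_congr fun L' => tsum_congr fun b => rfl
              _ = ∑' z : (Σ L' : {L' : ℕ // L' ∣ N / L}, TupT J L'.1),
                    u (iotaW L hLN ⟨a, z⟩) :=
                  (Summable.tsum_sigma' (fun L' => ((hW.sigma_factor a).sigma_factor L'))
                    (hW.sigma_factor a)).symm
        _ = (ArithmeticFunction.moebius L : ℂ) *
            ∑' x : IdxW J N L, u (iotaW L hLN x) := by
            rw [Summable.tsum_sigma' (fun a => hW.sigma_factor a) hW]
        _ = ∑' x : IdxW J N L,
              (ArithmeticFunction.moebius L : ℂ) * u (iotaW L hLN x) :=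
            tsum_mul_left.symm
        _ = ∑' y : IdxI J N,
              (if L ∣ y.1.1 then (ArithmeticFunction.moebius L : ℂ) * u y else 0) := by
            calc ∑' x : IdxW J N L, (ArithmeticFunction.moebius L : ℂ) * u (iotaW L hLN x)
                = ∑' x : IdxW J N L,
                    (fun y : IdxI J N => if L ∣ y.1.1
                      then (ArithmeticFunction.moebius L : ℂ) * u y else 0)
                      (iotaW L hLN x) :=
                  tsum_congr fun x => (if_pos ⟨x.2.1.1, rfl⟩).symm
              _ = ∑' y : IdxI J N, (if L ∣ y.1.1
                      then (ArithmeticFunction.moebius L : ℂ) * u y else 0) := by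
                  refine Function.Injective.tsum_eq (g := iotaW L hLN)
                    (f := fun y : IdxI J N => if L ∣ y.1.1
                      then (ArithmeticFunction.moebius L : ℂ) * u y else 0)
                    (iotaW_inj hN L hLN) ?_
                  intro y hy
                  by_cases h : L ∣ y.1.1
                  · obtain ⟨x, hx⟩ := iotaW_surj hN L hLN y h
                    exact ⟨x, hx⟩
                  · simp only [Function.mem_support, if_neg h, ne_eq, not_true_eq_false] at hy
    have hsummand : ∀ L ∈ N.divisors, Summable fun y : IdxI J N =>
        (if L ∣ y.1.1 then (ArithmeticFunction.moebius L : ℂ) * u y else 0) := by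
      intro L _
      apply Summable.of_norm_bounded
        (g := fun y : IdxI J N => ‖(ArithmeticFunction.moebius L : ℂ)‖ * ‖u y‖)
        (hS.mul_left _)
      intro y
      by_cases h : L ∣ y.1.1
      · rw [if_pos h, norm_mul]
      · rw [if_neg h, norm_zero]
        positivity
    have step4 : ∀ y : IdxI J N,
        (∑ L ∈ N.divisors,
          (if L ∣ y.1.1 then (ArithmeticFunction.moebius L : ℂ) * u y else 0))
        = (if y.1.1 = 1 then 1 else 0) * u y := by
      intro y
      have hK0 : y.1.1 ≠ 0 := fun h => hN0 (Nat.eq_zero_of_zero_dvd (h ▸ y.1.2))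
      have hfilter : N.divisors.filter (· ∣ y.1.1) = (y.1.1).divisors := by
        ext L
        simp only [Finset.mem_filter, Nat.mem_divisors]
        constructor
        · rintro ⟨⟨-, -⟩, h⟩
          exact ⟨h, hK0⟩
        · rintro ⟨h, -⟩
          exact ⟨⟨h.trans y.1.2, hN0⟩, h⟩
      rw [← Finset.sum_filter, hfilter, ← Finset.sum_mul, moebius_sum_eq _ hK0]
    have step5 : (∑' y : IdxI J N, (if y.1.1 = 1 then 1 else 0) * u y) = G m N := by
      have hzero : ∀ y : IdxI J N,
          y ≠ (⟨⟨1, one_dvd N⟩, ⟨1, ⟨fun i => Nat.one_pos, fun i p pp pd => pd⟩⟩⟩ : IdxI J N) →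
          (if y.1.1 = 1 then (1:ℂ) else 0) * u y = 0 := by
        intro y hy
        by_cases h : y.1.1 = 1
        · exfalso
          apply hy
          apply IdxI_ext h
          funext i
          show y.2.1 i = 1
          by_contra hne
          obtain ⟨p, pp, pd⟩ := Nat.exists_prime_and_dvd hne
          have := y.2.2.2 i p pp pd
          rw [h] at this
          exact pp.ne_one (Nat.eq_one_of_dvd_one this)
        · rw [if_neg h, zero_mul]
      rw [tsum_eq_single _ hzero]
      show (if (1:ℕ) = 1 then (1:ℂ) else 0) * u _ = G m N
      rw [if_pos rfl, one_mul, hudef]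
      show Φ 1 1 = G m N
      rw [hΦdef]
      show A 1 (fun i => lPart 1 (m i)) *
        G (α 1 (fun i => lPart 1 (m i)) * fun i => m i / lPart 1 (m i)) (N / 1) = G m N
      have e1 : (fun i => lPart 1 (m i)) = (1 : Fin d → ℕ) :=
        funext fun i => lPart_eq_one (Nat.coprime_one_right _)
      have e2 : (fun i => m i / lPart 1 (m i)) = m := funext fun i => by
        rw [lPart_eq_one (Nat.coprime_one_right _), Nat.div_one]
      rw [e1, e2, Nat.div_one, hα1, hA1, one_mul, one_mul]
    calc (∑ L ∈ N.divisors, (ArithmeticFunction.moebius L : ℂ) *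
        ∑' a : TupT J L, A a.1 (fun i => lPart L (m i)) *
          F (α a.1 (fun i => lPart L (m i)) * fun i => m i / lPart L (m i)) (N / L))
        = ∑ L ∈ N.divisors, ∑' y : IdxI J N,
            (if L ∣ y.1.1 then (ArithmeticFunction.moebius L : ℂ) * u y else 0) :=
          Finset.sum_congr rfl step1
      _ = ∑' y : IdxI J N, ∑ L ∈ N.divisors,
            (if L ∣ y.1.1 then (ArithmeticFunction.moebius L : ℂ) * u y else 0) :=
          (Summable.tsum_finsetSum hsummand).symm
      _ = ∑' y : IdxI J N, (if y.1.1 = 1 then 1 else 0) * u y := tsum_congr step4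
      _ = G m N := step5
  exact main.symm
end

section
/- For every integer n ≥ 0 the following identity holds in ℝ[X]: (2X)^n = Σ_{j=0}^{n} c_{j,n} · U_j(X), where c_{j,n} = binom(n, (n+j)/2) − binom(n, (n+j)/2 + 1) when n − j is even, and c_{j,n} = 0 when n − j is odd. -/
open Polynomial

/-- The Chebyshev coefficients: `c_{j,n} = C(n, (n+j)/2) - C(n, (n+j)/2 + 1)` when `n - j`
is even, and `c_{j,n} = 0` when `n - j` is odd (note `n - j` and `n + j` have the same
parity). -/
noncomputable def chebCoeff (j n : ℕ) : ℝ :=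
  if (n + j) % 2 = 0 then
    (n.choose ((n + j) / 2) : ℝ) - (n.choose ((n + j) / 2 + 1) : ℝ)
  else 0

lemma chebCoeff_eq_zero {j n : ℕ} (h : n < j) : chebCoeff j n = 0 := by
  rw [chebCoeff]
  split_ifs with hp
  · have h2 : n + 2 ≤ j := by omega
    have h3 : n < (n + j) / 2 := by omega
    rw [Nat.choose_eq_zero_of_lt h3, Nat.choose_eq_zero_of_lt (by omega)]
    simp
  · rfl

lemma chebCoeff_zero_succ (n : ℕ) : chebCoeff 0 (n + 1) = chebCoeff 1 n := by
  rw [chebCoeff, chebCoeff]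
  by_cases hp : (n + 1) % 2 = 0
  · obtain ⟨m, hm⟩ : ∃ m, n = 2 * m + 1 := ⟨n / 2, by omega⟩
    rw [if_pos (by omega), if_pos (by omega)]
    have e1 : (n + 1 + 0) / 2 = m + 1 := by omega
    rw [e1]
    have hsym : n.choose m = n.choose (m + 1) := by
      have h2 := Nat.choose_symm (show m + 1 ≤ 2 * m + 1 by omega)
      rw [show 2 * m + 1 - (m + 1) = m by omega] at h2
      rw [hm, ← h2]
    rw [show (n + 1).choose (m + 1) = n.choose m + n.choose (m + 1) from Nat.choose_succ_succ' n m,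
      show (n + 1).choose (m + 1 + 1) = n.choose (m + 1) + n.choose (m + 2) from
        Nat.choose_succ_succ' n (m + 1)]
    push_cast
    rw [hsym]; ring
  · rw [if_neg (by omega), if_neg (by omega)]

lemma chebCoeff_succ_succ (k n : ℕ) :
    chebCoeff (k + 1) (n + 1) = chebCoeff k n + chebCoeff (k + 2) n := by
  rw [chebCoeff, chebCoeff, chebCoeff]
  by_cases hp : (n + k) % 2 = 0
  · obtain ⟨m, hm⟩ : ∃ m, n + k = 2 * m := ⟨(n + k) / 2, by omega⟩
    rw [if_pos (by omega), if_pos (by omega), if_pos (by omega)]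
    have e1 : (n + 1 + (k + 1)) / 2 = m + 1 := by omega
    have e2 : (n + k) / 2 = m := by omega
    have e3 : (n + (k + 2)) / 2 = m + 1 := by omega
    rw [e1, e2, e3]
    rw [Nat.choose_succ_succ' n m, Nat.choose_succ_succ' n (m + 1)]
    push_cast
    ring
  · rw [if_neg (by omega), if_neg (by omega), if_neg (by omega)]; ring

open Polynomial.Chebyshev in
lemma two_X_mul_U (j : ℤ) : (2 * X : ℝ[X]) * U ℝ j = U ℝ (j + 1) + U ℝ (j - 1) := by
  have := U_add_two ℝ (j - 1)
  have h1 : j - 1 + 2 = j + 1 := by ring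
  have h2 : j - 1 + 1 = j := by ring
  rw [h1, h2] at this
  rw [this]; ring

/-- For every `n ≥ 0` one has
`(2X)^n = ∑_{j=0}^{n} c_{j,n} U_j(X)` in `ℝ[X]`, where `U_j` is the `j`-th Chebyshev
polynomial of the second kind. -/
theorem stmt4 (n : ℕ) :
    (2 * X : ℝ[X]) ^ n =
      ∑ j ∈ Finset.range (n + 1), C (chebCoeff j n) * Polynomial.Chebyshev.U ℝ (j : ℤ) := by
  induction n with
  | zero =>
    simp [chebCoeff, Polynomial.Chebyshev.U_zero]
  | succ n ih =>
    rw [pow_succ, ih]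
    rw [Finset.sum_mul]
    -- pull out the j = 0 term on the RHS via sum_range_succ'
    rw [Finset.sum_range_succ' (fun k => C (chebCoeff k (n + 1)) * Polynomial.Chebyshev.U ℝ (k : ℤ)) (n + 1)]
    simp only [Nat.cast_add, Nat.cast_one, Nat.cast_zero]
    rw [chebCoeff_zero_succ]
    have key : ∀ k : ℕ, C (chebCoeff (k + 1) (n + 1)) * Polynomial.Chebyshev.U ℝ ((k : ℤ) + 1)
        = C (chebCoeff k n) * Polynomial.Chebyshev.U ℝ ((k : ℤ) + 1)
          + C (chebCoeff (k + 2) n) * Polynomial.Chebyshev.U ℝ ((k : ℤ) + 1) := by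
      intro k
      rw [chebCoeff_succ_succ, map_add, add_mul]
    simp only [key]
    rw [Finset.sum_add_distrib]
    -- LHS of the goal (the sum we constructed) should match
    have lhs_eq : ∀ j : ℕ, C (chebCoeff j n) * Polynomial.Chebyshev.U ℝ (j : ℤ) * (2 * X)
        = C (chebCoeff j n) * Polynomial.Chebyshev.U ℝ ((j : ℤ) + 1)
          + C (chebCoeff j n) * Polynomial.Chebyshev.U ℝ ((j : ℤ) - 1) := by
      intro j
      rw [mul_assoc, mul_comm (Polynomial.Chebyshev.U ℝ (j : ℤ)) (2 * X), two_X_mul_U, mul_add]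
    simp only [lhs_eq]
    rw [Finset.sum_add_distrib, add_assoc]
    congr 1
    -- remaining: ∑ j ∈ range (n+1), C (chebCoeff j n) * U (j - 1)
    --   = ∑ k ∈ range (n+1), C (chebCoeff (k+2) n) * U (k+1) + C (chebCoeff 1 n) * U 0
    rw [Finset.sum_range_succ' (fun j => C (chebCoeff j n) * Polynomial.Chebyshev.U ℝ ((j : ℤ) - 1)) n]
    simp only [Nat.cast_add, Nat.cast_one, Nat.cast_zero]
    rw [show ((0 : ℤ) - 1) = -1 by ring, Polynomial.Chebyshev.U_neg_one, mul_zero, add_zero]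
    have shift : ∀ k : ℕ, ((k : ℤ) + 1 - 1) = (k : ℤ) := by intro k; ring
    -- now: ∑ k ∈ range n, C (chebCoeff (k+1) n) * U k
    --   = ∑ k ∈ range (n+1), C (chebCoeff (k+2) n) * U (k+1) + C (chebCoeff 1 n) * U 0
    have := Finset.sum_range_succ' (fun k => C (chebCoeff (k + 1) n) * Polynomial.Chebyshev.U ℝ (k : ℤ)) (n + 1)
    simp only [Nat.cast_add, Nat.cast_one, Nat.cast_zero] at this
    calc ∑ k ∈ Finset.range n, C (chebCoeff (k + 1) n) * Polynomial.Chebyshev.U ℝ ((k : ℤ) + 1 - 1)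
        = ∑ k ∈ Finset.range (n + 2), C (chebCoeff (k + 1) n) * Polynomial.Chebyshev.U ℝ (k : ℤ) := by
          simp only [shift]
          rw [Finset.sum_range_succ, Finset.sum_range_succ,
            chebCoeff_eq_zero (show n < n + 1 by omega),
            chebCoeff_eq_zero (show n < n + 1 + 1 by omega)]
          simp
      _ = ∑ k ∈ Finset.range (n + 1), C (chebCoeff (k + 1 + 1) n) * Polynomial.Chebyshev.U ℝ ((k : ℤ) + 1)
            + C (chebCoeff 1 n) * Polynomial.Chebyshev.U ℝ (0 : ℤ) := this
      _ = ∑ k ∈ Finset.range (n + 1), C (chebCoeff (k + 2) n) * Polynomial.Chebyshev.U ℝ ((k : ℤ) + 1)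
            + C (chebCoeff 1 n) * Polynomial.Chebyshev.U ℝ (0 : ℤ) := by norm_num
end

section
/- For every real number x > 0 and every integer n ≥ 0, Σ_{j=0}^{n} c_{j,n} x^j ≤ (x + x^{−1})^n. -/
/-- For every real `x > 0` and every integer `n ≥ 0`,
`∑_{j=0}^{n} c_{j,n} x^j ≤ (x + x⁻¹)^n`. -/
theorem stmt8 (x : ℝ) (hx : 0 < x) (n : ℕ) :
    ∑ j ∈ Finset.range (n + 1), chebCoeff j n * x ^ j ≤ (x + x⁻¹) ^ n := by
  have hxn : (0:ℝ) < x ^ n := pow_pos hx n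
  rw [← mul_le_mul_iff_of_pos_right hxn]
  have key : (x + x⁻¹) ^ n * x ^ n = (x ^ 2 + 1) ^ n := by
    rw [← mul_pow]
    congr 1
    field_simp
  rw [key, Finset.sum_mul]
  have hL : ∀ j ∈ Finset.range (n + 1),
      chebCoeff j n * x ^ j * x ^ n =
        chebCoeff j n * x ^ (n + j) := by
    intro j _
    rw [mul_assoc, ← pow_add, add_comm j n]
  rw [Finset.sum_congr rfl hL]
  have hR : (x ^ 2 + 1) ^ n =
      ∑ m ∈ Finset.range (n + 1), (n.choose m : ℝ) * (x ^ 2) ^ m := by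
    rw [add_pow]
    refine Finset.sum_congr rfl fun m _ => by ring
  rw [hR]
  calc ∑ j ∈ Finset.range (n + 1), chebCoeff j n * x ^ (n + j)
      ≤ ∑ j ∈ Finset.range (n + 1),
          (if (n + j) % 2 = 0 then (n.choose ((n + j) / 2) : ℝ) * x ^ (n + j) else 0) := by
        refine Finset.sum_le_sum fun j _ => ?_
        unfold chebCoeff
        split
        · exact mul_le_mul_of_nonneg_right
            (sub_le_self _ (Nat.cast_nonneg _)) (pow_nonneg hx.le _)
        · simp
    _ = ∑ j ∈ (Finset.range (n + 1)).filter (fun j => (n + j) % 2 = 0),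
          (n.choose ((n + j) / 2) : ℝ) * x ^ (n + j) := (Finset.sum_filter _ _).symm
    _ = ∑ m ∈ ((Finset.range (n + 1)).filter (fun j => (n + j) % 2 = 0)).image
          (fun j => (n + j) / 2), (n.choose m : ℝ) * (x ^ 2) ^ m := by
        rw [Finset.sum_image]
        · refine Finset.sum_congr rfl fun j hj => ?_
          rw [Finset.mem_filter] at hj
          have h2 : 2 * ((n + j) / 2) = n + j := Nat.two_mul_div_two_of_even
            (Nat.even_iff.2 hj.2)
          rw [← pow_mul, h2]
        · intro a ha b hb hab
          rw [Finset.mem_coe, Finset.mem_filter] at ha hb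
          have h2a : 2 * ((n + a) / 2) = n + a := Nat.two_mul_div_two_of_even
            (Nat.even_iff.2 ha.2)
          have h2b : 2 * ((n + b) / 2) = n + b := Nat.two_mul_div_two_of_even
            (Nat.even_iff.2 hb.2)
          beta_reduce at hab
          omega
    _ ≤ ∑ m ∈ Finset.range (n + 1), (n.choose m : ℝ) * (x ^ 2) ^ m := by
        refine Finset.sum_le_sum_of_subset_of_nonneg ?_ fun m _ _ =>
          mul_nonneg (Nat.cast_nonneg _) (pow_nonneg (sq_nonneg x) _)
        intro m hm
        simp only [Finset.mem_image, Finset.mem_filter, Finset.mem_range] at hm ⊢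
        obtain ⟨j, ⟨hj, _⟩, rfl⟩ := hm
        omega
end

section
/- Let γ ≥ 0 be a real number and ℓ a positive integer. Then Σ_{d | ℓ} c_ℓ(d) · d^γ ≤ ∏_{p | ℓ, p prime} (p^{−γ} + p^γ)^{v_p(ℓ)}, where v_p denotes the p-adic valuation. -/
/-- For `d ∣ ℓ`, `c_ℓ(d) = ∏_{p ∣ ℓ} c_{v_p(d), v_p(ℓ)}`, where `v_p` is the `p`-adic
valuation. -/
noncomputable def chebCoeffProd (ℓ d : ℕ) : ℝ :=
  ∏ p ∈ ℓ.primeFactors, chebCoeff (d.factorization p) (ℓ.factorization p)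

lemma cheb_sum_eq (n : ℕ) (t : ℝ) :
    ∑ j ∈ Finset.range (n+1), chebCoeff j n * t^j =
    ∑ k ∈ Finset.range (n/2+1),
      ((n.choose (n-k) : ℝ) - (n.choose (n-k+1) : ℝ)) * t^(n-2*k) := by
  rw [← Finset.sum_filter_of_ne (p := fun j => (n + j) % 2 = 0)
      (fun j _ h => by by_contra hp; exact h (by simp [chebCoeff, hp]))]
  refine Finset.sum_nbij' (i := fun j => (n - j)/2) (j := fun k => n - 2*k) ?_ ?_ ?_ ?_ ?_
  · intro j hj
    simp only [Finset.mem_filter, Finset.mem_range] at hj ⊢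
    omega
  · intro k hk
    simp only [Finset.mem_filter, Finset.mem_range] at hk ⊢
    omega
  · intro j hj
    simp only [Finset.mem_filter, Finset.mem_range] at hj
    omega
  · intro k hk
    simp only [Finset.mem_range] at hk
    omega
  · intro j hj
    simp only [Finset.mem_filter, Finset.mem_range] at hj
    have e1 : (n + j)/2 = n - (n - j)/2 := by omega
    have e2 : n - 2*((n - j)/2) = j := by omega
    rw [chebCoeff, if_pos hj.2, e1, e2]

lemma cheb_sum_bounds (n : ℕ) {t : ℝ} (ht : 1 ≤ t) :
    0 ≤ ∑ j ∈ Finset.range (n+1), chebCoeff j n * t^j ∧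
    ∑ j ∈ Finset.range (n+1), chebCoeff j n * t^j ≤ (t⁻¹ + t)^n := by
  have ht0 : (0:ℝ) < t := lt_of_lt_of_le one_pos ht
  set A : ℝ := ∑ k ∈ Finset.range (n/2+1), (n.choose (n-k) : ℝ) * t^(n-2*k) with hA
  set B : ℝ := ∑ k ∈ Finset.range (n/2+1), (n.choose (n-k+1) : ℝ) * t^(n-2*k) with hB
  have hSAB : ∑ j ∈ Finset.range (n+1), chebCoeff j n * t^j = A - B := by
    rw [cheb_sum_eq, hA, hB, ← Finset.sum_sub_distrib]
    exact Finset.sum_congr rfl fun k _ => by ring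
  have hB0 : 0 ≤ B := Finset.sum_nonneg fun k _ => by positivity
  have hBA : B ≤ A := by
    have hBeq : B = ∑ k ∈ Finset.range (n/2), (n.choose (n-k) : ℝ) * t^(n-2*k-2) := by
      rw [hB, Finset.sum_range_succ']
      have h0 : (n.choose (n-0+1) : ℝ) * t^(n-2*0) = 0 := by
        rw [Nat.choose_eq_zero_of_lt (by omega)]
        simp
      rw [h0, add_zero]
      refine Finset.sum_congr rfl fun k hk => ?_
      simp only [Finset.mem_range] at hk
      have e1 : n - (k+1) + 1 = n - k := by omega
      have e2 : n - 2*(k+1) = n - 2*k - 2 := by omega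
      rw [e1, e2]
    rw [hBeq]
    calc ∑ k ∈ Finset.range (n/2), (n.choose (n-k) : ℝ) * t^(n-2*k-2)
        ≤ ∑ k ∈ Finset.range (n/2), (n.choose (n-k) : ℝ) * t^(n-2*k) := by
          refine Finset.sum_le_sum fun k hk => ?_
          refine mul_le_mul_of_nonneg_left (pow_le_pow_right₀ ht (by omega)) (by positivity)
      _ ≤ A := by
          refine Finset.sum_le_sum_of_subset_of_nonneg
            (Finset.range_subset_range.mpr (by omega)) fun k _ _ => by positivity
  have hA' : A ≤ (t⁻¹ + t)^n := by
    rw [add_pow]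
    have hAeq : A = ∑ k ∈ Finset.range (n/2+1), t⁻¹^k * t^(n-k) * (n.choose k : ℝ) := by
      refine Finset.sum_congr rfl fun k hk => ?_
      simp only [Finset.mem_range] at hk
      have hk2 : 2*k ≤ n := by omega
      rw [Nat.choose_symm (by omega)]
      have hpow : t⁻¹^k * t^(n-k) = t^(n-2*k) := by
        rw [inv_pow, inv_mul_eq_iff_eq_mul₀ (by positivity), ← pow_add]
        congr 1
        omega
      rw [hpow]
      ring
    rw [hAeq]
    refine Finset.sum_le_sum_of_subset_of_nonneg
      (Finset.range_subset_range.mpr (by omega)) fun k _ _ => by positivity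
  constructor
  · rw [hSAB]; linarith
  · rw [hSAB]; linarith

lemma sum_divisors_coprime_mul {a b : ℕ} (hab : Nat.Coprime a b) (ha : a ≠ 0) (hb : b ≠ 0)
    (F : ℕ → ℝ) :
    ∑ d ∈ (a*b).divisors, F d = ∑ x ∈ a.divisors, ∑ y ∈ b.divisors, F (x * y) := by
  rw [← Finset.sum_product']
  refine Finset.sum_nbij' (i := fun d => (Nat.gcd d a, Nat.gcd d b))
    (j := fun p => p.1 * p.2) ?_ ?_ ?_ ?_ ?_
  · intro d hd
    simp only [Nat.mem_divisors, Finset.mem_product] at hd ⊢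
    exact ⟨⟨Nat.gcd_dvd_right d a, ha⟩, ⟨Nat.gcd_dvd_right d b, hb⟩⟩
  · intro p hp
    simp only [Nat.mem_divisors, Finset.mem_product] at hp ⊢
    exact ⟨mul_dvd_mul hp.1.1 hp.2.1, mul_ne_zero ha hb⟩
  · intro d hd
    simp only [Nat.mem_divisors] at hd
    exact (Nat.gcd_mul_gcd_eq_iff_dvd_mul_of_coprime hab).mpr hd.1
  · intro p hp
    simp only [Nat.mem_divisors, Finset.mem_product] at hp
    have h1 : Nat.gcd (p.1 * p.2) a = p.1 := by
      rw [mul_comm]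
      exact Nat.gcd_mul_of_coprime_of_dvd ((hab.symm.coprime_dvd_left hp.2.1)) hp.1.1
    have h2 : Nat.gcd (p.1 * p.2) b = p.2 :=
      Nat.gcd_mul_of_coprime_of_dvd (hab.coprime_dvd_left hp.1.1) hp.2.1
    rw [h1, h2]
  · intro d hd
    simp only [Nat.mem_divisors] at hd
    dsimp only
    rw [(Nat.gcd_mul_gcd_eq_iff_dvd_mul_of_coprime hab).mpr hd.1]

lemma sum_divisors_prod (g : ℕ → ℕ → ℝ) (n : ℕ) (hn : n ≠ 0) :
    ∑ d ∈ n.divisors, ∏ p ∈ n.primeFactors, g p (d.factorization p) =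
    ∏ p ∈ n.primeFactors, ∑ j ∈ Finset.range (n.factorization p + 1), g p j := by
  revert hn
  induction n using Nat.recOnPosPrimePosCoprime with
  | prime_pow p k pp hk =>
      intro _
      have pp' : p.Prime := pp
      rw [Nat.sum_divisors_prime_pow pp']
      rw [Nat.primeFactors_pow p hk.ne', pp'.primeFactors]
      simp only [Finset.prod_singleton, pp'.factorization_pow, Finsupp.single_eq_same]
  | zero => intro hn; exact absurd rfl hn
  | one => intro _; simp
  | coprime a b ha hb hab iha ihb =>
      intro _
      have ha0 : a ≠ 0 := by omega
      have hb0 : b ≠ 0 := by omega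
      have hdisj : Disjoint a.primeFactors b.primeFactors := hab.disjoint_primeFactors
      have hpf : (a*b).primeFactors = a.primeFactors ∪ b.primeFactors :=
        Nat.Coprime.primeFactors_mul hab
      have hva : ∀ p ∈ a.primeFactors, ∀ y ∈ b.divisors, y.factorization p = 0 := by
        intro p hp y hy
        simp only [Nat.mem_divisors] at hy
        refine Nat.factorization_eq_zero_of_not_dvd fun hdvd => ?_
        have hpb : p ∈ b.primeFactors :=
          Nat.mem_primeFactors.mpr ⟨Nat.prime_of_mem_primeFactors hp, hdvd.trans hy.1, hb0⟩
        exact Finset.disjoint_left.mp hdisj hp hpb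
      have hvb : ∀ p ∈ b.primeFactors, ∀ x ∈ a.divisors, x.factorization p = 0 := by
        intro p hp x hx
        simp only [Nat.mem_divisors] at hx
        refine Nat.factorization_eq_zero_of_not_dvd fun hdvd => ?_
        have hpa : p ∈ a.primeFactors :=
          Nat.mem_primeFactors.mpr ⟨Nat.prime_of_mem_primeFactors hp, hdvd.trans hx.1, ha0⟩
        exact Finset.disjoint_right.mp hdisj hp hpa
      rw [sum_divisors_coprime_mul hab ha0 hb0]
      have hsplit : ∀ x ∈ a.divisors, ∀ y ∈ b.divisors,
          ∏ p ∈ (a*b).primeFactors, g p ((x*y).factorization p) =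
          (∏ p ∈ a.primeFactors, g p (x.factorization p)) *
          (∏ p ∈ b.primeFactors, g p (y.factorization p)) := by
        intro x hx y hy
        have hx0 : x ≠ 0 := Nat.pos_of_mem_divisors hx |>.ne'
        have hy0 : y ≠ 0 := Nat.pos_of_mem_divisors hy |>.ne'
        rw [hpf, Finset.prod_union hdisj]
        congr 1
        · refine Finset.prod_congr rfl fun p hp => ?_
          rw [Nat.factorization_mul hx0 hy0]
          simp [hva p hp y hy]
        · refine Finset.prod_congr rfl fun p hp => ?_
          rw [Nat.factorization_mul hx0 hy0]
          simp [hvb p hp x hx]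
      calc ∑ x ∈ a.divisors, ∑ y ∈ b.divisors,
            ∏ p ∈ (a*b).primeFactors, g p ((x*y).factorization p)
          = ∑ x ∈ a.divisors, ∑ y ∈ b.divisors,
            (∏ p ∈ a.primeFactors, g p (x.factorization p)) *
            (∏ p ∈ b.primeFactors, g p (y.factorization p)) := by
            refine Finset.sum_congr rfl fun x hx => Finset.sum_congr rfl fun y hy => ?_
            exact hsplit x hx y hy
        _ = (∑ x ∈ a.divisors, ∏ p ∈ a.primeFactors, g p (x.factorization p)) *
            (∑ y ∈ b.divisors, ∏ p ∈ b.primeFactors, g p (y.factorization p)) := by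
            rw [Finset.sum_mul_sum]
        _ = (∏ p ∈ a.primeFactors, ∑ j ∈ Finset.range (a.factorization p + 1), g p j) *
            (∏ p ∈ b.primeFactors, ∑ j ∈ Finset.range (b.factorization p + 1), g p j) := by
            rw [iha ha0, ihb hb0]
        _ = ∏ p ∈ (a*b).primeFactors, ∑ j ∈ Finset.range ((a*b).factorization p + 1), g p j := by
            rw [hpf, Finset.prod_union hdisj]
            congr 1
            · refine Finset.prod_congr rfl fun p hp => ?_
              rw [Nat.factorization_mul ha0 hb0]
              have : b.factorization p = 0 := by
                refine Nat.factorization_eq_zero_of_not_dvd fun hdvd => ?_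
                exact Finset.disjoint_left.mp hdisj hp
                  (Nat.mem_primeFactors.mpr ⟨Nat.prime_of_mem_primeFactors hp, hdvd, hb0⟩)
              simp [this]
            · refine Finset.prod_congr rfl fun p hp => ?_
              rw [Nat.factorization_mul ha0 hb0]
              have : a.factorization p = 0 := by
                refine Nat.factorization_eq_zero_of_not_dvd fun hdvd => ?_
                exact Finset.disjoint_right.mp hdisj hp
                  (Nat.mem_primeFactors.mpr ⟨Nat.prime_of_mem_primeFactors hp, hdvd, ha0⟩)
              simp [this]


/-- For every real `γ ≥ 0` and every positive integer `ℓ`,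
`∑_{d ∣ ℓ} c_ℓ(d) d^γ ≤ ∏_{p ∣ ℓ} (p^{-γ} + p^γ)^{v_p(ℓ)}`. -/
theorem stmt9 (γ : ℝ) (hγ : 0 ≤ γ) (ℓ : ℕ) (hℓ : 0 < ℓ) :
    ∑ d ∈ ℓ.divisors, chebCoeffProd ℓ d * (d : ℝ) ^ γ ≤
      ∏ p ∈ ℓ.primeFactors, ((p : ℝ) ^ (-γ) + (p : ℝ) ^ γ) ^ (ℓ.factorization p) := by
  have hℓ0 : ℓ ≠ 0 := hℓ.ne'
  have hsummand : ∀ d ∈ ℓ.divisors, chebCoeffProd ℓ d * (d:ℝ)^γ =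
      ∏ p ∈ ℓ.primeFactors,
        chebCoeff (d.factorization p) (ℓ.factorization p) *
          ((p:ℝ)^γ)^(d.factorization p) := by
    intro d hd
    have hd0 : d ≠ 0 := (Nat.pos_of_mem_divisors hd).ne'
    have hdl : d ∣ ℓ := (Nat.mem_divisors.mp hd).1
    rw [Finset.prod_mul_distrib]
    unfold chebCoeffProd
    congr 1
    have h1 : (∏ p ∈ d.primeFactors, p ^ d.factorization p) = d := by
      rw [← Nat.support_factorization]
      exact Nat.factorization_prod_pow_eq_self hd0
    have h2 : d = ∏ p ∈ ℓ.primeFactors, p ^ d.factorization p := by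
      refine (Eq.trans ?_ h1).symm
      refine (Finset.prod_subset (Nat.primeFactors_mono hdl hℓ0) fun p _ hp => ?_).symm
      have h0 : d.factorization p = 0 := by
        rw [← Nat.support_factorization] at hp
        exact Finsupp.notMem_support_iff.mp hp
      rw [h0, pow_zero]
    have h3 : (d:ℝ) = ∏ p ∈ ℓ.primeFactors, ((p:ℕ):ℝ) ^ d.factorization p := by
      conv_lhs => rw [h2]
      push_cast
      rfl
    rw [h3, ← Real.finset_prod_rpow _ _ (fun p _ => by positivity) γ]
    refine Finset.prod_congr rfl fun p _ => ?_
    rw [← Real.rpow_natCast ((p:ℕ):ℝ) (d.factorization p), ← Real.rpow_mul (by positivity),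
      mul_comm, Real.rpow_mul (by positivity), Real.rpow_natCast]
  rw [Finset.sum_congr rfl hsummand,
    sum_divisors_prod (fun p j => chebCoeff j (ℓ.factorization p) * ((p:ℝ)^γ)^j) ℓ hℓ0]
  refine Finset.prod_le_prod ?_ ?_
  · intro p hp
    have hp1 : (1:ℝ) ≤ (p:ℝ) := by
      exact_mod_cast (Nat.prime_of_mem_primeFactors hp).one_lt.le
    exact (cheb_sum_bounds (ℓ.factorization p) (Real.one_le_rpow hp1 hγ)).1
  · intro p hp
    have hp1 : (1:ℝ) ≤ (p:ℝ) := by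
      exact_mod_cast (Nat.prime_of_mem_primeFactors hp).one_lt.le
    have := (cheb_sum_bounds (ℓ.factorization p) (Real.one_le_rpow hp1 hγ)).2
    rwa [← Real.rpow_neg (by positivity)] at this
end

section
/- For every positive integer ℓ, Σ_{d | ℓ} c_ℓ(d) ≤ ν(ℓ) · ℓ^{−log(3/2)/log 2}; equivalently, (Σ_{d | ℓ} c_ℓ(d)) / ν(ℓ) ≤ ℓ^{−0.5849…}. -/
/-- `ν` is the completely multiplicative function with `ν(p) = p + 1` for every prime `p`,
i.e. `ν(ℓ) = ∏_p (p+1)^{v_p(ℓ)}`. -/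
def nuCM (ℓ : ℕ) : ℕ := ∏ p ∈ ℓ.primeFactors, (p + 1) ^ ℓ.factorization p

noncomputable def chebSum (n : ℕ) : ℝ := ∑ j ∈ Finset.range (n + 1), chebCoeff j n

lemma chebSum_eq (n : ℕ) : chebSum n = (n.choose ((n + 1) / 2) : ℝ) := by
  have himg : (Finset.range (n + 1)).filter (fun j => (n + j) % 2 = 0)
      = (Finset.range (n / 2 + 1)).image (fun i => n - 2 * i) := by
    ext j
    simp only [Finset.mem_filter, Finset.mem_range, Finset.mem_image]
    constructor
    · rintro ⟨hj, hpar⟩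
      exact ⟨(n - j) / 2, by omega, by omega⟩
    · rintro ⟨i, hi, rfl⟩
      omega
  have : chebSum n = ∑ j ∈ (Finset.range (n + 1)).filter (fun j => (n + j) % 2 = 0),
      ((n.choose ((n + j) / 2) : ℝ) - (n.choose ((n + j) / 2 + 1) : ℝ)) := by
    simp only [chebSum, chebCoeff, Finset.sum_filter]
  rw [this, himg, Finset.sum_image (by intro a ha b hb h; simp [Finset.mem_range] at ha hb; have h' : n - 2 * a = n - 2 * b := h; omega)]
  have hterm : ∀ i ∈ Finset.range (n / 2 + 1),
      ((n.choose ((n + (n - 2 * i)) / 2) : ℝ) - (n.choose ((n + (n - 2 * i)) / 2 + 1) : ℝ))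
      = ((n.choose (n + 1 - (i + 1)) : ℝ) - (n.choose (n + 1 - i) : ℝ)) := by
    intro i hi
    simp only [Finset.mem_range] at hi
    have h1 : (n + (n - 2 * i)) / 2 = n - i := by omega
    have h2 : n + 1 - (i + 1) = n - i := by omega
    have h3 : n - i + 1 = n + 1 - i := by omega
    rw [h1, h2, h3]
  rw [Finset.sum_congr rfl hterm, Finset.sum_range_sub (fun i => (n.choose (n + 1 - i) : ℝ))]
  have h4 : n + 1 - (n / 2 + 1) = (n + 1) / 2 := by omega
  simp [h4, Nat.choose_eq_zero_of_lt (by omega : n < n + 1)]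

lemma choose_le_two_pow' (n k : ℕ) : (n.choose k : ℝ) ≤ 2 ^ n := by
  have : n.choose k ≤ 2 ^ n := by
    rcases le_or_gt k n with h | h
    · calc n.choose k ≤ ∑ m ∈ Finset.range (n + 1), n.choose m :=
            Finset.single_le_sum (fun _ _ => Nat.zero_le _) (Finset.mem_range.mpr (by omega))
        _ = 2 ^ n := Nat.sum_range_choose n
    · simp [Nat.choose_eq_zero_of_lt h]
  exact_mod_cast this

lemma sum_divisors_coprime (f : ℕ → ℝ) {a b : ℕ} (ha : a ≠ 0) (hb : b ≠ 0)
    (hab : Nat.Coprime a b) :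
    ∑ d ∈ (a * b).divisors, f d = ∑ x ∈ a.divisors, ∑ y ∈ b.divisors, f (x * y) := by
  rw [Nat.divisors_mul, Finset.mul_def, Finset.sum_image, Finset.sum_product]
  intro p hp q hq h
  simp only [Finset.mem_coe, Finset.mem_product, Nat.mem_divisors] at hp hq h
  obtain ⟨⟨hp1, _⟩, ⟨hp2, _⟩⟩ := hp
  obtain ⟨⟨hq1, _⟩, ⟨hq2, _⟩⟩ := hq
  have hc1 : Nat.Coprime p.1 q.2 := Nat.Coprime.coprime_dvd_left hp1 (hab.coprime_dvd_right hq2)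
  have hc2 : Nat.Coprime q.1 p.2 := Nat.Coprime.coprime_dvd_left hq1 (hab.coprime_dvd_right hp2)
  have h1 : p.1 = q.1 := by
    refine Nat.dvd_antisymm ?_ ?_
    · exact hc1.dvd_of_dvd_mul_right (h ▸ Dvd.intro p.2 rfl : p.1 ∣ q.1 * q.2)
    · exact hc2.dvd_of_dvd_mul_right (h ▸ Dvd.intro q.2 rfl : q.1 ∣ p.1 * p.2)
  have hpos : 0 < p.1 := Nat.pos_of_dvd_of_pos hp1 (Nat.pos_of_ne_zero ha)
  have h2 : p.2 = q.2 := Nat.eq_of_mul_eq_mul_left hpos (by rw [h1] at h ⊢; exact h)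
  exact Prod.ext h1 h2

lemma fact_mul_left {a b p : ℕ} (ha : a ≠ 0) (hb : b ≠ 0) (hab : Nat.Coprime a b)
    (hp : p ∈ a.primeFactors) : (a * b).factorization p = a.factorization p := by
  have hpb : ¬ p ∣ b := fun hdvd => (Nat.Prime.one_lt (Nat.prime_of_mem_primeFactors hp)).ne'
    (Nat.eq_one_of_dvd_coprimes hab (Nat.dvd_of_mem_primeFactors hp) hdvd)
  rw [Nat.factorization_mul ha hb, Finsupp.add_apply,
    Nat.factorization_eq_zero_of_not_dvd hpb, add_zero]

lemma chebCoeffProd_mul {a b x y : ℕ} (ha : a ≠ 0) (hb : b ≠ 0) (hab : Nat.Coprime a b)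
    (hx : x ∣ a) (hy : y ∣ b) :
    chebCoeffProd (a * b) (x * y) = chebCoeffProd a x * chebCoeffProd b y := by
  have hx0 : x ≠ 0 := fun h => ha (by simpa [h] using hx)
  have hy0 : y ≠ 0 := fun h => hb (by simpa [h] using hy)
  have hxy : Nat.Coprime x y := Nat.Coprime.coprime_dvd_left hx (hab.coprime_dvd_right hy)
  unfold chebCoeffProd
  rw [Nat.primeFactors_mul ha hb, Finset.prod_union hab.disjoint_primeFactors]
  congr 1
  · apply Finset.prod_congr rfl
    intro p hp
    have h1 := fact_mul_left ha hb hab hp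
    have h2 : (x * y).factorization p = x.factorization p := by
      rcases eq_or_ne (x.factorization p) 0 with h | h
      · rw [h]
        by_cases hpy : (y.factorization p) = 0
        · rw [Nat.factorization_mul hx0 hy0, Finsupp.add_apply, h, hpy]
        · exfalso
          have hppy : p ∈ y.primeFactors := by
            rw [← Nat.support_factorization]; exact Finsupp.mem_support_iff.mpr hpy
          exact (Finset.disjoint_left.mp hab.disjoint_primeFactors hp)
            (Nat.mem_primeFactors_of_ne_zero hb |>.mpr
              ⟨Nat.prime_of_mem_primeFactors hppy,
               dvd_trans (Nat.dvd_of_mem_primeFactors hppy) hy⟩)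
      · have hppx : p ∈ y.primeFactors → False := by
          intro hppy
          exact (Finset.disjoint_left.mp hab.disjoint_primeFactors hp)
            (Nat.mem_primeFactors_of_ne_zero hb |>.mpr
              ⟨Nat.prime_of_mem_primeFactors hppy,
               dvd_trans (Nat.dvd_of_mem_primeFactors hppy) hy⟩)
        have : y.factorization p = 0 := by
          by_contra hpy
          exact hppx (by rw [← Nat.support_factorization]; exact Finsupp.mem_support_iff.mpr hpy)
        rw [Nat.factorization_mul hx0 hy0, Finsupp.add_apply, this, add_zero]
      -- fallthrough
    rw [h1, h2]
  · apply Finset.prod_congr rfl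
    intro p hp
    have h1 : (a * b).factorization p = b.factorization p := by
      rw [mul_comm]; exact fact_mul_left hb ha hab.symm hp
    have h2 : (x * y).factorization p = y.factorization p := by
      have : x.factorization p = 0 := by
        by_contra hpx
        have hppx : p ∈ x.primeFactors := by
          rw [← Nat.support_factorization]; exact Finsupp.mem_support_iff.mpr hpx
        exact (Finset.disjoint_right.mp hab.disjoint_primeFactors hp)
          (Nat.mem_primeFactors_of_ne_zero ha |>.mpr
            ⟨Nat.prime_of_mem_primeFactors hppx,
             dvd_trans (Nat.dvd_of_mem_primeFactors hppx) hx⟩)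
      rw [Nat.factorization_mul hx0 hy0, Finsupp.add_apply, this, zero_add]
    rw [h1, h2]

lemma sum_cheb_eq : ∀ ℓ : ℕ, ℓ ≠ 0 →
    ∑ d ∈ ℓ.divisors, chebCoeffProd ℓ d
      = ∏ p ∈ ℓ.primeFactors, chebSum (ℓ.factorization p) := by
  intro ℓ
  induction ℓ using Nat.recOnPosPrimePosCoprime with
  | prime_pow p n hp hn =>
    intro _
    have hp' : p.Prime := hp
    rw [Nat.sum_divisors_prime_pow hp']
    rw [Nat.primeFactors_prime_pow hn.ne' hp', Finset.prod_singleton]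
    have hfn : (p ^ n).factorization p = n := by
      simp [hp'.factorization_pow]
    rw [hfn]
    unfold chebSum
    apply Finset.sum_congr rfl
    intro x _
    unfold chebCoeffProd
    rw [Nat.primeFactors_prime_pow hn.ne' hp', Finset.prod_singleton, hfn]
    congr 1
    simp [hp'.factorization_pow]
  | zero => intro h; exact absurd rfl h
  | one =>
    intro _
    simp [chebCoeffProd]
  | coprime a b ha hb hab iha ihb =>
    intro _
    have ha0 : a ≠ 0 := by omega
    have hb0 : b ≠ 0 := by omega
    rw [sum_divisors_coprime _ ha0 hb0 hab]
    have : ∀ x ∈ a.divisors, ∀ y ∈ b.divisors,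
        chebCoeffProd (a * b) (x * y) = chebCoeffProd a x * chebCoeffProd b y := by
      intro x hx y hy
      exact chebCoeffProd_mul ha0 hb0 hab (Nat.dvd_of_mem_divisors hx)
        (Nat.dvd_of_mem_divisors hy)
    calc ∑ x ∈ a.divisors, ∑ y ∈ b.divisors, chebCoeffProd (a * b) (x * y)
        = ∑ x ∈ a.divisors, ∑ y ∈ b.divisors, chebCoeffProd a x * chebCoeffProd b y := by
          apply Finset.sum_congr rfl; intro x hx; apply Finset.sum_congr rfl; intro y hy
          exact this x hx y hy
      _ = (∑ x ∈ a.divisors, chebCoeffProd a x) * (∑ y ∈ b.divisors, chebCoeffProd b y) := by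
          rw [Finset.sum_mul_sum]
      _ = (∏ p ∈ a.primeFactors, chebSum (a.factorization p))
            * (∏ p ∈ b.primeFactors, chebSum (b.factorization p)) := by
          rw [iha ha0, ihb hb0]
      _ = ∏ p ∈ (a * b).primeFactors, chebSum ((a * b).factorization p) := by
          rw [Nat.primeFactors_mul ha0 hb0, Finset.prod_union hab.disjoint_primeFactors]
          congr 1
          · exact Finset.prod_congr rfl fun p hp => by rw [fact_mul_left ha0 hb0 hab hp]
          · exact Finset.prod_congr rfl fun p hp => by
              rw [mul_comm a b, fact_mul_left hb0 ha0 hab.symm hp]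

lemma alpha_nonneg : 0 ≤ Real.log (3 / 2) / Real.log 2 :=
  div_nonneg (Real.log_nonneg (by norm_num)) (Real.log_nonneg (by norm_num))

lemma alpha_le : Real.log (3 / 2) / Real.log 2 ≤ 2 / 3 := by
  rw [div_le_div_iff₀ (Real.log_pos (by norm_num)) (by norm_num)]
  have h1 : Real.log (3 / 2) * 3 = Real.log ((3 / 2) ^ (3 : ℕ)) := by
    rw [Real.log_pow]; ring
  have h2 : (2 : ℝ) * Real.log 2 = Real.log ((2 : ℝ) ^ (2 : ℕ)) := by
    rw [Real.log_pow]; ring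
  rw [h1, ← mul_comm (Real.log 2) 2, mul_comm (Real.log 2) 2, h2]
  apply Real.log_le_log (by positivity)
  norm_num

lemma two_rpow_alpha : (2 : ℝ) ^ (Real.log (3 / 2) / Real.log 2) = 3 / 2 := by
  rw [Real.rpow_def_of_pos (by norm_num : (0:ℝ) < 2),
    mul_div_cancel₀ _ (Real.log_ne_zero_of_pos_of_ne_one (by norm_num) (by norm_num))]
  exact Real.exp_log (by norm_num)

lemma key2 {x : ℝ} (hx : 2 ≤ x) :
    2 * x ^ (Real.log (3 / 2) / Real.log 2) ≤ x + 1 := by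
  set α := Real.log (3 / 2) / Real.log 2 with hα
  have hx2 : x ^ α = (3 / 2) * (x / 2) ^ α := by
    have hxx : (2 : ℝ) * (x / 2) = x := by ring
    calc x ^ α = (2 * (x / 2)) ^ α := by rw [hxx]
      _ = 2 ^ α * (x / 2) ^ α := Real.mul_rpow (by norm_num) (by linarith)
      _ = (3 / 2) * (x / 2) ^ α := by rw [hα, two_rpow_alpha]
  have hbern : (x / 2) ^ α ≤ 1 + α * (x / 2 - 1) := by
    have := rpow_one_add_le_one_add_mul_self
      (s := x / 2 - 1) (by linarith) alpha_nonneg (le_trans alpha_le (by norm_num))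
    simpa using this
  have h1 : 0 ≤ x / 2 - 1 := by linarith
  have h2 := alpha_le
  nlinarith [hbern, h1, h2]


/-- For every positive integer `ℓ`,
`∑_{d ∣ ℓ} c_ℓ(d) ≤ ν(ℓ) · ℓ^{-log(3/2)/log 2}`; equivalently,
`(∑_{d ∣ ℓ} c_ℓ(d)) / ν(ℓ) ≤ ℓ^{-0.5849…}`. -/
theorem stmt11 (ℓ : ℕ) (hℓ : 0 < ℓ) :
    ∑ d ∈ ℓ.divisors, chebCoeffProd ℓ d ≤
      (nuCM ℓ : ℝ) * (ℓ : ℝ) ^ (-(Real.log (3 / 2) / Real.log 2)) := by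
  set α := Real.log (3 / 2) / Real.log 2 with hα
  have hℓ0 : ℓ ≠ 0 := hℓ.ne'
  rw [sum_cheb_eq ℓ hℓ0]
  have hnu : (nuCM ℓ : ℝ) = ∏ p ∈ ℓ.primeFactors, ((p : ℝ) + 1) ^ ℓ.factorization p := by
    rw [nuCM]; push_cast; rfl
  have hfac : (ℓ : ℝ) = ∏ p ∈ ℓ.primeFactors, ((p : ℝ)) ^ ℓ.factorization p := by
    conv_lhs => rw [← Nat.factorization_prod_pow_eq_self hℓ0]
    push_cast; rfl
  have hrpow : (ℓ : ℝ) ^ (-α)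
      = ∏ p ∈ ℓ.primeFactors, ((p : ℝ) ^ (-α)) ^ ℓ.factorization p := by
    rw [hfac, ← Real.finset_prod_rpow _ _ (fun p _ => by positivity) (-α)]
    apply Finset.prod_congr rfl
    intro p hp
    have hp0 : (0 : ℝ) ≤ (p : ℝ) := by positivity
    rw [← Real.rpow_natCast (p : ℝ) (ℓ.factorization p), ← Real.rpow_mul hp0,
      mul_comm, Real.rpow_mul hp0, Real.rpow_natCast]
  rw [hnu, hrpow, ← Finset.prod_mul_distrib]
  apply Finset.prod_le_prod
  · intro p _
    rw [chebSum_eq]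
    positivity
  · intro p hp
    have hpp : p.Prime := Nat.prime_of_mem_primeFactors hp
    have hx : (2 : ℝ) ≤ (p : ℝ) := by exact_mod_cast hpp.two_le
    have hbase : (2 : ℝ) ≤ ((p : ℝ) + 1) * (p : ℝ) ^ (-α) := by
      have hpos : (0 : ℝ) < (p : ℝ) ^ α := Real.rpow_pos_of_pos (by linarith) _
      rw [Real.rpow_neg (by linarith), ← div_eq_mul_inv, le_div_iff₀ hpos]
      linarith [key2 hx]
    calc chebSum (ℓ.factorization p) ≤ (2 : ℝ) ^ ℓ.factorization p := by
          rw [chebSum_eq]; exact choose_le_two_pow' _ _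
      _ ≤ (((p : ℝ) + 1) * (p : ℝ) ^ (-α)) ^ ℓ.factorization p :=
          pow_le_pow_left₀ (by norm_num) hbase _
      _ = ((p : ℝ) + 1) ^ ℓ.factorization p * ((p : ℝ) ^ (-α)) ^ ℓ.factorization p :=
          mul_pow _ _ _
end

section
/- Let A, B, c be positive integers and a₁, a₂, a₃ integers, and define G_{A,B}(a₁, a₂, a₃; c) = c^{−3} · Σ_{x₁, x₂, x₃ mod c} S(A·x₁·x₂, B·x₃; c) · e_c(a₁x₁ + a₂x₂ + a₃x₃). If gcd(B, c) ≠ gcd(a₃, c), or gcd(A, c) ∤ a₁, or gcd(A, c) ∤ a₂, then G_{A,B}(a₁, a₂, a₃; c) = 0. -/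
/-- The additive character `e_c(t) = exp(2πi·t/c)`. -/
noncomputable def eAdd (c : ℕ) (t : ℤ) : ℂ :=
  Complex.exp (2 * Real.pi * Complex.I * (t : ℂ) / (c : ℂ))

/-- The Kloosterman sum `S(m, n; c) = ∑_{u mod c, gcd(u,c)=1} e_c(m·u + n·u⁻¹)`, where
`u⁻¹` denotes the inverse of `u` modulo `c`. -/
noncomputable def kloostermanS (m n : ℤ) (c : ℕ) : ℂ :=
  ∑ u ∈ (Finset.range c).filter (fun u => Nat.Coprime u c),
    eAdd c (m * u + n * (ZMod.val ((u : ZMod c)⁻¹) : ℤ))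

/-- The complete exponential sum
`G_{A,B}(a₁, a₂, a₃; c) = c⁻³ ∑_{x₁,x₂,x₃ mod c} S(A x₁ x₂, B x₃; c) e_c(a₁x₁ + a₂x₂ + a₃x₃)`. -/
noncomputable def GAB (A B : ℕ) (a₁ a₂ a₃ : ℤ) (c : ℕ) : ℂ :=
  ((c : ℂ) ^ 3)⁻¹ *
    ∑ x₁ ∈ Finset.range c, ∑ x₂ ∈ Finset.range c, ∑ x₃ ∈ Finset.range c,
      kloostermanS ((A : ℤ) * x₁ * x₂) ((B : ℤ) * x₃) c *
        eAdd c (a₁ * x₁ + a₂ * x₂ + a₃ * x₃)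

lemma eAdd_add (c : ℕ) (s t : ℤ) : eAdd c (s + t) = eAdd c s * eAdd c t := by
  unfold eAdd
  rw [← Complex.exp_add]
  congr 1
  push_cast
  ring

lemma eAdd_nat_mul (c : ℕ) (t : ℤ) (x : ℕ) : eAdd c (t * x) = eAdd c t ^ x := by
  unfold eAdd
  rw [← Complex.exp_nat_mul]
  congr 1
  push_cast
  ring

lemma eAdd_ne_one {c : ℕ} (hc : 0 < c) {t : ℤ} (h : ¬ (c:ℤ) ∣ t) : eAdd c t ≠ 1 := by
  intro h1
  rw [eAdd, Complex.exp_eq_one_iff] at h1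
  obtain ⟨n, hn⟩ := h1
  have hcne : (c:ℂ) ≠ 0 := Nat.cast_ne_zero.mpr hc.ne'
  have hpi : (Real.pi : ℂ) ≠ 0 := Complex.ofReal_ne_zero.mpr Real.pi_ne_zero
  have h2 : (2 * (Real.pi:ℂ) * Complex.I) ≠ 0 :=
    mul_ne_zero (mul_ne_zero two_ne_zero hpi) Complex.I_ne_zero
  have ht : (t:ℂ) = (n:ℂ) * c := by
    field_simp at hn
    apply mul_left_cancel₀ h2
    linear_combination (2 * (Real.pi:ℂ) * Complex.I) * hn
  have ht2 : t = c * n := by exact_mod_cast ht.trans (mul_comm _ _)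
  exact h ⟨n, ht2⟩

lemma sum_eAdd_eq_zero {c : ℕ} (hc : 0 < c) {t : ℤ} (s : ℤ) (h : ¬ (c:ℤ) ∣ t) :
    ∑ x ∈ Finset.range c, eAdd c (t * x + s) = 0 := by
  have hz : eAdd c t ≠ 1 := eAdd_ne_one hc h
  have hpow : eAdd c t ^ c = 1 := by
    rw [← eAdd_nat_mul, eAdd]
    have hcne : (c:ℂ) ≠ 0 := Nat.cast_ne_zero.mpr hc.ne'
    have : 2 * (Real.pi:ℂ) * Complex.I * ((t * c : ℤ):ℂ) / c = t * (2 * Real.pi * Complex.I) := by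
      push_cast; field_simp
    rw [this, Complex.exp_int_mul_two_pi_mul_I]
  calc ∑ x ∈ Finset.range c, eAdd c (t * x + s)
      = (∑ x ∈ Finset.range c, eAdd c t ^ x) * eAdd c s := by
        rw [Finset.sum_mul]
        exact Finset.sum_congr rfl fun x _ => by rw [eAdd_add, eAdd_nat_mul]
    _ = 0 := by rw [geom_sum_eq hz, hpow]; simp


/-- Let `A, B, c` be positive integers and `a₁, a₂, a₃` integers.  If
`gcd(B, c) ≠ gcd(a₃, c)`, or `gcd(A, c) ∤ a₁`, or `gcd(A, c) ∤ a₂`, then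
`G_{A,B}(a₁, a₂, a₃; c) = 0`.  (By convention `gcd(0, c) = c`.) -/
theorem stmt17 (A B c : ℕ) (hA : 0 < A) (hB : 0 < B) (hc : 0 < c) (a₁ a₂ a₃ : ℤ)
    (h : Nat.gcd B c ≠ Int.gcd a₃ (c : ℤ) ∨ ¬ ((Nat.gcd A c : ℤ) ∣ a₁) ∨
      ¬ ((Nat.gcd A c : ℤ) ∣ a₂)) :
    GAB A B a₁ a₂ a₃ c = 0 := by
  set U := (Finset.range c).filter (fun u => Nat.Coprime u c) with hU
  have hvcop : ∀ u ∈ U, Nat.Coprime (ZMod.val (((u:ℕ) : ZMod c)⁻¹)) c := by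
    intro u hu
    have hu' : Nat.Coprime u c := (Finset.mem_filter.mp hu).2
    have heq : ((u : ZMod c))⁻¹ = ((ZMod.unitOfCoprime u hu')⁻¹ : (ZMod c)ˣ) := by
      rw [← ZMod.coe_unitOfCoprime u hu', ZMod.inv_coe_unit]
    rw [heq]
    exact ZMod.val_coe_unit_coprime _
  have expand : ∀ x1 x2 x3 : ℕ,
      kloostermanS ((A:ℤ)*x1*x2) ((B:ℤ)*x3) c * eAdd c (a₁*x1+a₂*x2+a₃*x3)
      = ∑ u ∈ U, eAdd c ((A:ℤ)*x1*x2*u + (B:ℤ)*x3*(ZMod.val (((u:ℕ):ZMod c)⁻¹):ℤ)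
          + (a₁*x1+a₂*x2+a₃*x3)) := by
    intro x1 x2 x3
    rw [kloostermanS, Finset.sum_mul]
    exact Finset.sum_congr rfl fun u _ => (eAdd_add c _ _).symm
  suffices hs : (∑ x₁ ∈ Finset.range c, ∑ x₂ ∈ Finset.range c, ∑ x₃ ∈ Finset.range c,
      kloostermanS ((A : ℤ) * x₁ * x₂) ((B : ℤ) * x₃) c *
        eAdd c (a₁ * x₁ + a₂ * x₂ + a₃ * x₃)) = 0 by
    rw [GAB, hs, mul_zero]
  simp only [expand]
  rcases h with h3 | h1 | h2
  · -- case gcd(B,c) ≠ gcd(a₃,c)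
    have hnd : ∀ u ∈ U, ¬ (c:ℤ) ∣ (B:ℤ) * (ZMod.val (((u:ℕ):ZMod c)⁻¹):ℤ) + a₃ := by
      intro u hu hdvd
      obtain ⟨k, hk⟩ := hdvd
      set w : ℕ := ZMod.val (((u:ℕ):ZMod c)⁻¹) with hw
      have hvc : Nat.Coprime w c := hvcop u hu
      set d := Nat.gcd B c with hd
      set g := Int.gcd a₃ (c:ℤ) with hg
      have hdB : (d:ℤ) ∣ (B:ℤ) := Int.natCast_dvd_natCast.mpr (Nat.gcd_dvd_left B c)
      have hdc : (d:ℤ) ∣ (c:ℤ) := Int.natCast_dvd_natCast.mpr (Nat.gcd_dvd_right B c)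
      have ha3 : a₃ = (c:ℤ)*k - (B:ℤ)*w := by linarith [hk]
      have hda3 : (d:ℤ) ∣ a₃ := by
        rw [ha3]; exact dvd_sub (hdc.mul_right k) (hdB.mul_right w)
      have hdg : d ∣ g := Int.dvd_gcd hda3 hdc
      have hga3 : (g:ℤ) ∣ a₃ := Int.gcd_dvd_left _ _
      have hgc' : (g:ℤ) ∣ (c:ℤ) := Int.gcd_dvd_right _ _
      have hgc : g ∣ c := Int.natCast_dvd_natCast.mp hgc'
      have hgBw : g ∣ B * w := by
        have : (g:ℤ) ∣ (B:ℤ)*w := by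
          have : (B:ℤ)*w = (c:ℤ)*k - a₃ := by linarith [hk]
          rw [this]; exact dvd_sub (hgc'.mul_right k) hga3
        exact_mod_cast this
      have hgw : Nat.Coprime g w := ((hvc.coprime_dvd_right hgc)).symm
      have hgB : g ∣ B := hgw.dvd_of_dvd_mul_right hgBw
      exact h3 (Nat.dvd_antisymm hdg (Nat.dvd_gcd hgB hgc))
    refine Finset.sum_eq_zero fun x1 _ => ?_
    refine Finset.sum_eq_zero fun x2 _ => ?_
    rw [Finset.sum_comm]
    refine Finset.sum_eq_zero fun u hu => ?_
    have hre : ∀ x3 ∈ Finset.range c,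
        eAdd c ((A:ℤ)*x1*x2*u + (B:ℤ)*x3*(ZMod.val (((u:ℕ):ZMod c)⁻¹):ℤ)
          + (a₁*x1+a₂*x2+a₃*x3))
        = eAdd c (((B:ℤ)*(ZMod.val (((u:ℕ):ZMod c)⁻¹):ℤ) + a₃)*x3
            + ((A:ℤ)*x1*x2*u + a₁*x1 + a₂*x2)) := fun x3 _ => by congr 1; ring
    rw [Finset.sum_congr rfl hre]
    exact sum_eAdd_eq_zero hc _ (hnd u hu)
  · -- case gcd(A,c) ∤ a₁
    have hnd : ∀ (x2 u : ℕ), ¬ (c:ℤ) ∣ (A:ℤ)*x2*u + a₁ := by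
      intro x2 u hdvd
      obtain ⟨k, hk⟩ := hdvd
      have hdA : ((Nat.gcd A c : ℕ):ℤ) ∣ (A:ℤ) := Int.natCast_dvd_natCast.mpr (Nat.gcd_dvd_left A c)
      have hdc : ((Nat.gcd A c : ℕ):ℤ) ∣ (c:ℤ) := Int.natCast_dvd_natCast.mpr (Nat.gcd_dvd_right A c)
      have ha1 : a₁ = (c:ℤ)*k - (A:ℤ)*x2*u := by linarith [hk]
      exact h1 (ha1 ▸ dvd_sub (hdc.mul_right k) ((hdA.mul_right x2).mul_right u))
    rw [Finset.sum_comm]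
    refine Finset.sum_eq_zero fun x2 _ => ?_
    rw [Finset.sum_comm]
    refine Finset.sum_eq_zero fun x3 _ => ?_
    rw [Finset.sum_comm]
    refine Finset.sum_eq_zero fun u _ => ?_
    have hre : ∀ x1 ∈ Finset.range c,
        eAdd c ((A:ℤ)*x1*x2*u + (B:ℤ)*x3*(ZMod.val (((u:ℕ):ZMod c)⁻¹):ℤ)
          + (a₁*x1+a₂*x2+a₃*x3))
        = eAdd c (((A:ℤ)*x2*u + a₁)*x1
            + ((B:ℤ)*x3*(ZMod.val (((u:ℕ):ZMod c)⁻¹):ℤ) + a₂*x2 + a₃*x3)) :=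
      fun x1 _ => by congr 1; ring
    rw [Finset.sum_congr rfl hre]
    exact sum_eAdd_eq_zero hc _ (hnd x2 u)
  · -- case gcd(A,c) ∤ a₂
    have hnd : ∀ (x1 u : ℕ), ¬ (c:ℤ) ∣ (A:ℤ)*x1*u + a₂ := by
      intro x1 u hdvd
      obtain ⟨k, hk⟩ := hdvd
      have hdA : ((Nat.gcd A c : ℕ):ℤ) ∣ (A:ℤ) := Int.natCast_dvd_natCast.mpr (Nat.gcd_dvd_left A c)
      have hdc : ((Nat.gcd A c : ℕ):ℤ) ∣ (c:ℤ) := Int.natCast_dvd_natCast.mpr (Nat.gcd_dvd_right A c)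
      have ha2 : a₂ = (c:ℤ)*k - (A:ℤ)*x1*u := by linarith [hk]
      exact h2 (ha2 ▸ dvd_sub (hdc.mul_right k) ((hdA.mul_right x1).mul_right u))
    refine Finset.sum_eq_zero fun x1 _ => ?_
    rw [Finset.sum_comm]
    refine Finset.sum_eq_zero fun x3 _ => ?_
    rw [Finset.sum_comm]
    refine Finset.sum_eq_zero fun u _ => ?_
    have hre : ∀ x2 ∈ Finset.range c,
        eAdd c ((A:ℤ)*x1*x2*u + (B:ℤ)*x3*(ZMod.val (((u:ℕ):ZMod c)⁻¹):ℤ)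
          + (a₁*x1+a₂*x2+a₃*x3))
        = eAdd c (((A:ℤ)*x1*u + a₂)*x2
            + ((B:ℤ)*x3*(ZMod.val (((u:ℕ):ZMod c)⁻¹):ℤ) + a₁*x1 + a₃*x3)) :=
      fun x2 _ => by congr 1; ring
    rw [Finset.sum_congr rfl hre]
    exact sum_eAdd_eq_zero hc _ (hnd x1 u)
end

section
/- For every ε > 0 there exists a constant C = C(ε) > 0 such that for all positive integers D and Q, Σ_{n ≥ 1, rad(n) | D} gcd(n, Q)/n ≤ C · (D·Q)^ε, where the sum is over all positive integers n every prime factor of which divides D (including n = 1), and this series converges. -/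
open scoped ENNReal

namespace Stmt18Aux

noncomputable def g (Q n : ℕ) : ℝ≥0∞ := (Nat.gcd n Q : ℝ≥0∞) / (n : ℝ≥0∞)

lemma g_one (Q : ℕ) : g Q 1 = 1 := by simp [g]

lemma g_ne_top {Q n : ℕ} (hn : 0 < n) : g Q n ≠ ⊤ :=
  (ENNReal.div_lt_top (by simp) (by exact_mod_cast hn.ne')).ne

lemma g_mul (Q : ℕ) {m n : ℕ} (hm : 0 < m) (hn : 0 < n) (h : Nat.Coprime m n) :
    g Q (m * n) = g Q m * g Q n := by
  have hgcd : Nat.gcd (m * n) Q = Nat.gcd m Q * Nat.gcd n Q := by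
    rw [Nat.gcd_comm (m * n) Q, Nat.Coprime.gcd_mul Q h, Nat.gcd_comm Q m, Nat.gcd_comm Q n]
  have hinv : ((m : ℝ≥0∞) * (n : ℝ≥0∞))⁻¹ = (m : ℝ≥0∞)⁻¹ * (n : ℝ≥0∞)⁻¹ :=
    ENNReal.mul_inv (Or.inl (by exact_mod_cast hm.ne')) (Or.inl (by simp))
  simp only [g, hgcd, div_eq_mul_inv, Nat.cast_mul, hinv]
  ring

/-- Euler-product upper bound. -/
lemma euler_le (Q : ℕ) (P : Finset ℕ) (hP : ∀ p ∈ P, p.Prime) :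
    ∑' n : ℕ, (if 0 < n ∧ n.primeFactors ⊆ P then g Q n else 0)
      ≤ ∏ p ∈ P, ∑' k : ℕ, g Q (p ^ k) := by
  induction P using Finset.induction_on with
  | empty =>
      rw [Finset.prod_empty]
      have h1 : ∀ n : ℕ, (if 0 < n ∧ n.primeFactors ⊆ (∅ : Finset ℕ) then g Q n else 0)
          = if n = 1 then g Q 1 else 0 := by
        intro n
        by_cases h : n = 1
        · subst h; simp
        · rcases Nat.eq_zero_or_pos n with h0 | h0
          · subst h0; simp
          · have : ¬ n.primeFactors ⊆ (∅ : Finset ℕ) := by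
              rw [Finset.subset_empty, Nat.primeFactors_eq_empty]
              simp [h0.ne', h]
            simp [this, h]
      rw [tsum_congr h1, tsum_ite_eq, g_one]
  | @insert p P hpP ih =>
      have hp : p.Prime := hP p (Finset.mem_insert_self p P)
      have hP' : ∀ q ∈ P, q.Prime := fun q hq => hP q (Finset.mem_insert_of_mem hq)
      set i : ℕ → ℕ × ℕ := fun n => (n.factorization p, n / p ^ n.factorization p) with hidef
      have hrec : ∀ n : ℕ, p ^ (i n).1 * (i n).2 = n := fun n =>
        Nat.ordProj_mul_ordCompl_eq_self n p
      have hinj : Function.Injective i := by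
        intro a b hab
        rw [← hrec a, ← hrec b, hab]
      have key : ∀ n : ℕ,
          (if 0 < n ∧ n.primeFactors ⊆ insert p P then g Q n else 0) =
          g Q (p ^ (i n).1) *
            (if 0 < (i n).2 ∧ (i n).2.primeFactors ⊆ P then g Q (i n).2 else 0) := by
        intro n
        rcases Nat.eq_zero_or_pos n with h0 | h0
        · subst h0
          simp [hidef]
        · set k := n.factorization p
          set m := n / p ^ k with hmdef
          have hmpos : 0 < m := Nat.ordCompl_pos p h0.ne'
          have hpm : ¬ p ∣ m := Nat.not_dvd_ordCompl hp h0.ne'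
          have hnm : p ^ k * m = n := hrec n
          have hcop : Nat.Coprime (p ^ k) m :=
            Nat.Coprime.pow_left k ((Nat.Prime.coprime_iff_not_dvd hp).2 hpm)
          have hgn : g Q n = g Q (p ^ k) * g Q m := by
            rw [← hnm, g_mul Q (pow_pos hp.pos k) hmpos hcop]
          by_cases hsub : n.primeFactors ⊆ insert p P
          · have hm_sub : m.primeFactors ⊆ P := by
              intro q hq
              have hq' : q ∈ n.primeFactors :=
                Nat.primeFactors_mono (hmdef ▸ Nat.ordCompl_dvd n p) h0.ne' hq
              rcases Finset.mem_insert.1 (hsub hq') with rfl | hqP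
              · exact absurd (Nat.dvd_of_mem_primeFactors hq) hpm
              · exact hqP
            rw [if_pos ⟨h0, hsub⟩, if_pos ⟨hmpos, hm_sub⟩]
            exact hgn
          · have hm_nsub : ¬ m.primeFactors ⊆ P := by
              intro hmP
              apply hsub
              have hpf : n.primeFactors = (p ^ k * m).primeFactors := by rw [hnm]
              rcases Nat.eq_zero_or_pos k with hk0 | hk0
              · rw [hpf, hk0, pow_zero, one_mul]
                exact hmP.trans (Finset.subset_insert p P)
              · rw [hpf, Nat.primeFactors_mul (pow_ne_zero k hp.ne_zero) hmpos.ne',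
                  Nat.primeFactors_pow _ hk0.ne', Nat.Prime.primeFactors hp]
                intro q hq
                rcases Finset.mem_union.1 hq with hq1 | hq2
                · rw [Finset.mem_singleton.1 hq1]; exact Finset.mem_insert_self p P
                · exact Finset.mem_insert_of_mem (hmP hq2)
            rw [if_neg (fun hc => hsub hc.2), if_neg (fun hc => hm_nsub hc.2), mul_zero]
      calc ∑' n : ℕ, (if 0 < n ∧ n.primeFactors ⊆ insert p P then g Q n else 0)
          = ∑' n : ℕ, (fun x : ℕ × ℕ => g Q (p ^ x.1) *
              (if 0 < x.2 ∧ x.2.primeFactors ⊆ P then g Q x.2 else 0)) (i n) :=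
            tsum_congr key
        _ ≤ ∑' x : ℕ × ℕ, g Q (p ^ x.1) *
              (if 0 < x.2 ∧ x.2.primeFactors ⊆ P then g Q x.2 else 0) :=
            ENNReal.tsum_comp_le_tsum_of_injective hinj _
        _ = (∑' k : ℕ, g Q (p ^ k)) *
              ∑' m : ℕ, (if 0 < m ∧ m.primeFactors ⊆ P then g Q m else 0) := by
            rw [ENNReal.tsum_prod
              (f := fun k m => g Q (p ^ k) *
                if 0 < m ∧ m.primeFactors ⊆ P then g Q m else 0),
              ← ENNReal.tsum_mul_right]
            exact tsum_congr fun k => ENNReal.tsum_mul_left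
        _ ≤ (∑' k : ℕ, g Q (p ^ k)) * ∏ q ∈ P, ∑' k : ℕ, g Q (q ^ k) :=
            mul_le_mul_right (ih hP') _
        _ = ∏ q ∈ insert p P, ∑' k : ℕ, g Q (q ^ k) := by rw [Finset.prod_insert hpP]

/-- Local factor bound. -/
lemma local_le {Q p : ℕ} (hp : p.Prime) (hQ : 0 < Q) :
    ∑' k : ℕ, g Q (p ^ k) ≤ ((Q.factorization p + 2 : ℕ) : ℝ≥0∞) := by
  set a := Q.factorization p with ha
  have hterm : ∀ k : ℕ, g Q (p ^ k) ≤
      (if k ≤ a then 1 else 0) + (if a < k then (2 : ℝ≥0∞)⁻¹ ^ (k - a) else 0) := by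
    intro k
    have hpk : (0:ℕ) < p ^ k := pow_pos hp.pos k
    by_cases hk : k ≤ a
    · rw [if_pos hk, if_neg (not_lt.2 hk), add_zero]
      rw [g, ENNReal.div_le_iff (by exact_mod_cast hpk.ne') (by simp), one_mul]
      exact_mod_cast Nat.gcd_le_left Q hpk
    · push_neg at hk
      rw [if_neg (not_le.2 hk), if_pos hk, zero_add]
      have hgcd : Nat.gcd (p ^ k) Q ≤ p ^ a := by
        obtain ⟨j, hjk, hj⟩ := (Nat.dvd_prime_pow hp).1 (Nat.gcd_dvd_left (p ^ k) Q)
        have hja : j ≤ a := by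
          rw [ha]
          exact (Nat.Prime.pow_dvd_iff_le_factorization hp hQ.ne').1
            (hj ▸ Nat.gcd_dvd_right (p ^ k) Q)
        rw [hj]
        exact Nat.pow_le_pow_right hp.pos hja
      have h1 : g Q (p ^ k) ≤ ((p : ℝ≥0∞) ^ a) / ((p : ℝ≥0∞) ^ k) := by
        rw [g]
        push_cast
        gcongr
        exact_mod_cast hgcd
      refine h1.trans ?_
      rw [ENNReal.div_le_iff (pow_ne_zero _ (by exact_mod_cast hp.pos.ne'))
        (by exact ENNReal.pow_ne_top (by simp))]
      have h12 : (1 : ℝ≥0∞) ≤ 2⁻¹ * (p : ℝ≥0∞) := by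
        have h2p : (2 : ℝ≥0∞) ≤ (p : ℝ≥0∞) := by exact_mod_cast hp.two_le
        calc (1 : ℝ≥0∞) = 2⁻¹ * 2 := by
              rw [ENNReal.inv_mul_cancel (by norm_num) (by norm_num)]
          _ ≤ 2⁻¹ * (p : ℝ≥0∞) := by gcongr
      calc (p : ℝ≥0∞) ^ a = (p : ℝ≥0∞) ^ a * 1 := (mul_one _).symm
        _ ≤ (p : ℝ≥0∞) ^ a * ((2 : ℝ≥0∞)⁻¹ * p) ^ (k - a) := by
            gcongr
            exact one_le_pow_of_one_le' h12 (k - a)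
        _ = (2 : ℝ≥0∞)⁻¹ ^ (k - a) * ((p : ℝ≥0∞) ^ a * (p : ℝ≥0∞) ^ (k - a)) := by
            rw [mul_pow]; ring
        _ = (2 : ℝ≥0∞)⁻¹ ^ (k - a) * (p : ℝ≥0∞) ^ k := by
            rw [← pow_add]
            congr 2
            omega
  have hsum1 : (∑' k : ℕ, if k ≤ a then (1 : ℝ≥0∞) else 0) = ((a + 1 : ℕ) : ℝ≥0∞) := by
    rw [tsum_eq_sum (s := Finset.range (a + 1))
      (fun b hb => by rw [if_neg (fun h => hb (Finset.mem_range.2 (by omega)))])]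
    rw [Finset.sum_congr rfl
      (fun b hb => if_pos (by have := Finset.mem_range.1 hb; omega))]
    simp
  have hsum2 : (∑' k : ℕ, if a < k then (2 : ℝ≥0∞)⁻¹ ^ (k - a) else 0) = 1 := by
    have hre : (∑' k : ℕ, if a < k then (2 : ℝ≥0∞)⁻¹ ^ (k - a) else 0)
        = ∑' j : ℕ, (2 : ℝ≥0∞)⁻¹ ^ (j + 1) := by
      rw [← Function.Injective.tsum_eq (g := fun j : ℕ => a + 1 + j)
        (fun x y h => by simp only at h; omega) ?_]
      · refine tsum_congr fun j => ?_
        rw [if_pos (by omega : a < a + 1 + j)]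
        congr 1
        omega
      · intro k hk
        rw [Function.mem_support] at hk
        have hak : a < k := by by_contra h; exact hk (if_neg h)
        exact ⟨k - a - 1, by simp only; omega⟩
    rw [hre]
    calc (∑' j : ℕ, (2 : ℝ≥0∞)⁻¹ ^ (j + 1))
        = (2 : ℝ≥0∞)⁻¹ * ∑' j : ℕ, (2 : ℝ≥0∞)⁻¹ ^ j := by
          rw [← ENNReal.tsum_mul_left]
          exact tsum_congr fun j => by rw [pow_succ]; ring
      _ = 1 := by
          rw [ENNReal.tsum_geometric, ENNReal.one_sub_inv_two, inv_inv,
            ENNReal.inv_mul_cancel (by norm_num) (by norm_num)]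
  calc ∑' k : ℕ, g Q (p ^ k)
      ≤ ∑' k : ℕ, ((if k ≤ a then (1:ℝ≥0∞) else 0)
          + (if a < k then (2 : ℝ≥0∞)⁻¹ ^ (k - a) else 0)) := ENNReal.tsum_le_tsum hterm
    _ = ((a + 1 : ℕ) : ℝ≥0∞) + 1 := by rw [ENNReal.tsum_add, hsum1, hsum2]
    _ = ((a + 2 : ℕ) : ℝ≥0∞) := by push_cast; ring


set_option maxHeartbeats 1000000 in
/-- The purely real combinatorial bound: `∏_{p ∣ D} (v_p(Q)+2) ≤ C (DQ)^ε`. -/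
lemma real_bound (ε : ℝ) (hε : 0 < ε) :
    ∃ C : ℝ, 0 < C ∧ ∀ D Q : ℕ, 0 < D → 0 < Q →
      (∏ p ∈ D.primeFactors, ((Q.factorization p + 2 : ℕ) : ℝ))
        ≤ C * ((D * Q : ℕ) : ℝ) ^ ε := by
  have h2 : (1 : ℝ) < (2 : ℝ) ^ (ε / 2) := by
    rw [Real.one_lt_rpow_iff_of_pos (by norm_num)]
    exact Or.inl ⟨one_lt_two, by positivity⟩
  set c : ℝ := (2 : ℝ) ^ (ε / 2) - 1 with hc
  have hc0 : 0 < c := by simp only [hc]; linarith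
  set K : ℝ := max 2 (1 / c) with hK
  have hK2 : (2 : ℝ) ≤ K := le_max_left _ _
  have hK1 : (1 : ℝ) ≤ K := by linarith
  have hKc : 1 ≤ K * c := by
    calc (1 : ℝ) = (1 / c) * c := by field_simp
      _ ≤ K * c := by gcongr; exact le_max_right _ _
  set T : ℕ := ⌈(2 : ℝ) ^ (2 / ε)⌉₊ with hT
  refine ⟨K ^ T, by positivity, ?_⟩
  intro D Q hD hQ
  set P := D.primeFactors with hP
  have hprime : ∀ p ∈ P, p.Prime := fun p hp => Nat.prime_of_mem_primeFactors hp
  -- pointwise bound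
  have hpoint : ∀ p ∈ P, ((Q.factorization p + 2 : ℕ) : ℝ)
      ≤ (if p < T then K else 1) *
        ((p : ℝ) ^ (ε / 2) * (((p ^ Q.factorization p : ℕ) : ℝ)) ^ (ε / 2)) := by
    intro p hp
    have hpp : p.Prime := hprime p hp
    set a := Q.factorization p with hadef
    have hp2 : (2 : ℝ) ≤ (p : ℝ) := by exact_mod_cast hpp.two_le
    have hp0 : (0 : ℝ) ≤ (p : ℝ) := by linarith
    have hcast : ((p ^ a : ℕ) : ℝ) = (p : ℝ) ^ a := by push_cast; ring
    have h4 : ((p : ℝ) ^ (ε / 2)) ^ a = ((p ^ a : ℕ) : ℝ) ^ (ε / 2) := by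
      rw [hcast, ← Real.rpow_natCast ((p : ℝ) ^ (ε / 2)) a, ← Real.rpow_natCast (p : ℝ) a,
        ← Real.rpow_mul hp0, ← Real.rpow_mul hp0, mul_comm]
    have h5 : (1 : ℝ) ≤ (p : ℝ) ^ (ε / 2) :=
      Real.one_le_rpow (by linarith) (by positivity)
    have hcastsum : ((a + 2 : ℕ) : ℝ) = (a : ℝ) + 2 := by push_cast; ring
    by_cases hpT : p < T
    · rw [if_pos hpT]
      have h1 : ((a : ℝ) + 2) ≤ K * (1 + c * a) := by
        have ha0 : (0 : ℝ) ≤ (a : ℝ) := Nat.cast_nonneg a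
        nlinarith
      have h2' : (1 + c * (a : ℝ)) ≤ ((2 : ℝ) ^ (ε / 2)) ^ a := by
        have hb := one_add_mul_le_pow (by linarith : (-2 : ℝ) ≤ c) a
        calc (1 + c * (a : ℝ)) = 1 + (a : ℝ) * c := by ring
          _ ≤ (1 + c) ^ a := hb
          _ = ((2 : ℝ) ^ (ε / 2)) ^ a := by rw [hc]; ring_nf
      have h3 : ((2 : ℝ) ^ (ε / 2)) ^ a ≤ ((p : ℝ) ^ (ε / 2)) ^ a :=
        pow_le_pow_left₀ (by positivity)
          (Real.rpow_le_rpow (by norm_num) hp2 (by positivity)) a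
      calc ((a + 2 : ℕ) : ℝ) = (a : ℝ) + 2 := hcastsum
        _ ≤ K * (((p ^ a : ℕ) : ℝ) ^ (ε / 2)) := by
            rw [← h4]
            calc (a : ℝ) + 2 ≤ K * (1 + c * a) := h1
              _ ≤ K * ((2 : ℝ) ^ (ε / 2)) ^ a :=
                  mul_le_mul_of_nonneg_left h2' (by linarith)
              _ ≤ K * ((p : ℝ) ^ (ε / 2)) ^ a :=
                  mul_le_mul_of_nonneg_left h3 (by linarith)
        _ = K * (1 * (((p ^ a : ℕ) : ℝ)) ^ (ε / 2)) := by ring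
        _ ≤ K * ((p : ℝ) ^ (ε / 2) * (((p ^ a : ℕ) : ℝ)) ^ (ε / 2)) := by
            have hnn : (0 : ℝ) ≤ ((p ^ a : ℕ) : ℝ) ^ (ε / 2) := by positivity
            exact mul_le_mul_of_nonneg_left
              (mul_le_mul_of_nonneg_right h5 hnn) (by linarith)
    · rw [if_neg hpT, one_mul]
      have hTp : ((2 : ℝ) ^ (2 / ε)) ≤ (p : ℝ) := by
        refine le_trans (Nat.le_ceil _) ?_
        exact_mod_cast Nat.not_lt.1 hpT
      have hexp : (2 / ε) * (ε / 2) = 1 := by field_simp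
      have h2p : (2 : ℝ) ≤ (p : ℝ) ^ (ε / 2) := by
        have hr := Real.rpow_le_rpow (by positivity) hTp (by positivity : (0:ℝ) ≤ ε / 2)
        rwa [← Real.rpow_mul (by norm_num : (0:ℝ) ≤ 2), hexp, Real.rpow_one] at hr
      have hstepN : a + 2 ≤ 2 ^ (a + 1) := Nat.lt_two_pow_self (n := a + 1)
      have hstep : (a : ℝ) + 2 ≤ 2 * 2 ^ a := by
        have : ((a + 2 : ℕ) : ℝ) ≤ ((2 ^ (a + 1) : ℕ) : ℝ) := by exact_mod_cast hstepN
        push_cast at this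
        linarith [this, (by ring : (2:ℝ) ^ (a + 1) = 2 * 2 ^ a)]
      calc ((a + 2 : ℕ) : ℝ) = (a : ℝ) + 2 := hcastsum
        _ ≤ 2 * 2 ^ a := hstep
        _ ≤ (p : ℝ) ^ (ε / 2) * ((p : ℝ) ^ (ε / 2)) ^ a :=
            mul_le_mul h2p (pow_le_pow_left₀ (by norm_num) h2p a)
              (by positivity) (by positivity)
        _ = (p : ℝ) ^ (ε / 2) * (((p ^ a : ℕ) : ℝ)) ^ (ε / 2) := by rw [h4]
  -- combine
  have hprod : (∏ p ∈ P, ((Q.factorization p + 2 : ℕ) : ℝ))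
      ≤ (∏ p ∈ P, (if p < T then K else 1)) *
        ((∏ p ∈ P, (p : ℝ) ^ (ε / 2)) *
          ∏ p ∈ P, (((p ^ Q.factorization p : ℕ) : ℝ)) ^ (ε / 2)) := by
    rw [← Finset.prod_mul_distrib, ← Finset.prod_mul_distrib]
    exact Finset.prod_le_prod (fun p _ => by positivity) hpoint
  have hA : (∏ p ∈ P, (if p < T then K else 1)) ≤ K ^ T := by
    rw [Finset.prod_ite, Finset.prod_const, Finset.prod_const_one, mul_one]
    refine pow_le_pow_right₀ hK1 ?_
    calc (P.filter (fun p => p < T)).card ≤ (Finset.range T).card :=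
          Finset.card_le_card (fun x hx =>
            Finset.mem_range.2 (Finset.mem_filter.1 hx).2)
      _ = T := Finset.card_range T
  have hB : (∏ p ∈ P, (p : ℝ) ^ (ε / 2)) ≤ (D : ℝ) ^ (ε / 2) := by
    rw [Real.finset_prod_rpow P _ (fun p _ => Nat.cast_nonneg p)]
    refine Real.rpow_le_rpow (by positivity) ?_ (by positivity)
    have hdvd := Nat.prod_primeFactors_dvd D
    have hle := Nat.le_of_dvd hD hdvd
    calc (∏ p ∈ P, (p : ℝ)) = ((∏ p ∈ P, p : ℕ) : ℝ) := by push_cast; rfl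
      _ ≤ (D : ℝ) := by exact_mod_cast hle
  have hC : (∏ p ∈ P, (((p ^ Q.factorization p : ℕ) : ℝ)) ^ (ε / 2))
      ≤ (Q : ℝ) ^ (ε / 2) := by
    rw [Real.finset_prod_rpow P _ (fun p _ => Nat.cast_nonneg _)]
    refine Real.rpow_le_rpow (by positivity) ?_ (by positivity)
    have hQeq : ∏ p ∈ Q.primeFactors, p ^ Q.factorization p = Q := by
      have h := Nat.factorization_prod_pow_eq_self hQ.ne'
      rwa [Finsupp.prod, Nat.support_factorization] at h
    have hdvd : (∏ p ∈ P, p ^ Q.factorization p) ∣ Q := by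
      have hsplit : ∏ p ∈ P, p ^ Q.factorization p
          = ∏ p ∈ P ∩ Q.primeFactors, p ^ Q.factorization p := by
        symm
        refine Finset.prod_subset Finset.inter_subset_left ?_
        intro x hx hnx
        have hx0 : Q.factorization x = 0 := by
          by_contra h0
          exact hnx (Finset.mem_inter.2 ⟨hx, by
            rw [← Nat.support_factorization]
            exact Finsupp.mem_support_iff.2 h0⟩)
        simp [hx0]
      have h1 := Finset.prod_dvd_prod_of_subset (P ∩ Q.primeFactors) Q.primeFactors
        (fun p => p ^ Q.factorization p) Finset.inter_subset_right
      rw [hsplit]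
      exact h1.trans (dvd_of_eq hQeq)
    have hle := Nat.le_of_dvd hQ hdvd
    have hcast2 : (∏ p ∈ P, ((p ^ Q.factorization p : ℕ) : ℝ))
        = ((∏ p ∈ P, p ^ Q.factorization p : ℕ) : ℝ) := by push_cast; rfl
    rw [hcast2]
    exact_mod_cast hle
  have hDQ1 : (1 : ℝ) ≤ ((D * Q : ℕ) : ℝ) := by
    have : 1 ≤ D * Q := Nat.one_le_iff_ne_zero.2 (by positivity)
    exact_mod_cast this
  calc (∏ p ∈ P, ((Q.factorization p + 2 : ℕ) : ℝ))
      ≤ (∏ p ∈ P, (if p < T then K else 1)) *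
        ((∏ p ∈ P, (p : ℝ) ^ (ε / 2)) *
          ∏ p ∈ P, (((p ^ Q.factorization p : ℕ) : ℝ)) ^ (ε / 2)) := hprod
    _ ≤ K ^ T * ((D : ℝ) ^ (ε / 2) * (Q : ℝ) ^ (ε / 2)) := by
        have h1 : (0:ℝ) ≤ ∏ p ∈ P, (p : ℝ) ^ (ε / 2) :=
          Finset.prod_nonneg fun p _ => by positivity
        have h2' : (0:ℝ) ≤ ∏ p ∈ P, (((p ^ Q.factorization p : ℕ) : ℝ)) ^ (ε / 2) :=
          Finset.prod_nonneg fun p _ => by positivity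
        have h3 : (0:ℝ) ≤ ∏ p ∈ P, (if p < T then K else 1) :=
          Finset.prod_nonneg fun p _ => by positivity
        refine mul_le_mul hA (mul_le_mul hB hC h2' (by positivity))
          (mul_nonneg h1 h2') (by positivity)
    _ = K ^ T * ((D * Q : ℕ) : ℝ) ^ (ε / 2) := by
        rw [Nat.cast_mul, Real.mul_rpow (Nat.cast_nonneg D) (Nat.cast_nonneg Q)]
    _ ≤ K ^ T * ((D * Q : ℕ) : ℝ) ^ ε :=
        mul_le_mul_of_nonneg_left
          (Real.rpow_le_rpow_of_exponent_le hDQ1 (by linarith)) (by positivity)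

end Stmt18Aux



/-- For every `ε > 0` there is a constant `C = C(ε) > 0` such that for
all positive integers `D` and `Q`, the series `∑_{n ≥ 1, rad(n) ∣ D} gcd(n, Q)/n`
(over positive integers `n` all of whose prime factors divide `D`, including `n = 1`)
converges and is at most `C · (D·Q)^ε`. -/
theorem stmt18 (ε : ℝ) (hε : 0 < ε) :
    ∃ C : ℝ, 0 < C ∧ ∀ D Q : ℕ, 0 < D → 0 < Q →
      Summable (fun n : ℕ =>
        if 0 < n ∧ n.primeFactors ⊆ D.primeFactors then (Nat.gcd n Q : ℝ) / (n : ℝ) else 0) ∧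
      (∑' n : ℕ,
        if 0 < n ∧ n.primeFactors ⊆ D.primeFactors then (Nat.gcd n Q : ℝ) / (n : ℝ) else 0)
        ≤ C * ((D * Q : ℕ) : ℝ) ^ ε := by
  obtain ⟨C, hC0, hC⟩ := Stmt18Aux.real_bound ε hε
  refine ⟨C, hC0, ?_⟩
  intro D Q hD hQ
  have hprime : ∀ p ∈ D.primeFactors, p.Prime :=
    fun p hp => Nat.prime_of_mem_primeFactors hp
  set F : ℕ → ℝ≥0∞ :=
    fun n => if 0 < n ∧ n.primeFactors ⊆ D.primeFactors then Stmt18Aux.g Q n else 0 with hF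
  have hFle : ∑' n, F n
      ≤ ((∏ p ∈ D.primeFactors, (Q.factorization p + 2) : ℕ) : ℝ≥0∞) := by
    refine (Stmt18Aux.euler_le Q D.primeFactors hprime).trans ?_
    rw [Nat.cast_prod]
    exact Finset.prod_le_prod' fun p hp => Stmt18Aux.local_le (hprime p hp) hQ
  have hFtop : ∑' n, F n ≠ ⊤ := ne_top_of_le_ne_top (ENNReal.natCast_ne_top _) hFle
  have hFn : ∀ n, F n ≠ ⊤ := by
    intro n
    rw [hF]
    dsimp only
    split
    · next h => exact Stmt18Aux.g_ne_top h.1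
    · exact ENNReal.zero_ne_top
  have hfeq : (fun n : ℕ => if 0 < n ∧ n.primeFactors ⊆ D.primeFactors
        then (Nat.gcd n Q : ℝ) / (n : ℝ) else 0)
      = fun n => (F n).toReal := by
    funext n
    rw [hF]
    dsimp only
    by_cases h : 0 < n ∧ n.primeFactors ⊆ D.primeFactors
    · rw [if_pos h, if_pos h, Stmt18Aux.g, ENNReal.toReal_div]
      simp
    · rw [if_neg h, if_neg h]
      simp
  constructor
  · rw [hfeq]
    exact ENNReal.summable_toReal hFtop
  · rw [hfeq, ← ENNReal.tsum_toReal_eq hFn]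
    refine le_trans (ENNReal.toReal_mono (ENNReal.natCast_ne_top _) hFle) ?_
    rw [ENNReal.toReal_natCast]
    calc ((∏ p ∈ D.primeFactors, (Q.factorization p + 2) : ℕ) : ℝ)
        = ∏ p ∈ D.primeFactors, ((Q.factorization p + 2 : ℕ) : ℝ) := by push_cast; rfl
      _ ≤ C * ((D * Q : ℕ) : ℝ) ^ ε := hC D Q hD hQ
end
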